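/- arXiv:1905.04298 — 2 statements merged into one kernel-verified Lean document; each statement's English description precedes it below -/
import Mathlib

section
/- Let Γ ⊆ R^{ab} be the ℤ-submodule generated by the 3n classes (βⁱ)·[aⁿ], (αⁱ)·[bⁿ] and (αⁱ)·[(ab)ⁿ] for 0 ≤ i ≤ n−1. Then the (n−1)(n−2) classes (αⁱβʲ)·[[b,a]] mod Γ, for 0 ≤ i ≤ n−2 and 0 ≤ j ≤ n−3, form a ℤ-basis of the quotient R^{ab}/Γ (the first homology of the closed Fermat curve of exponent n). -/
namespace Fermat

open scoped commutatorElement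

/-- The free group on two generators. -/
abbrev F2 : Type := FreeGroup (Fin 2)

/-- The first generator `a` of `F₂`. -/
def a : F2 := FreeGroup.of 0

/-- The second generator `b` of `F₂`. -/
def b : F2 := FreeGroup.of 1

/-- The group `H₀ = (ℤ/nℤ) × (ℤ/nℤ)`, written multiplicatively. -/
abbrev H0 (n : ℕ) : Type := Multiplicative (ZMod n × ZMod n)

/-- The homomorphism `φ : F₂ → (ℤ/nℤ) × (ℤ/nℤ)` with `φ(a) = (1,0)`, `φ(b) = (0,1)`. -/
def phi (n : ℕ) : F2 →* H0 n :=
  FreeGroup.lift fun i =>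
    Multiplicative.ofAdd (if i = (0 : Fin 2) then ((1 : ZMod n), (0 : ZMod n)) else (0, 1))

/-- `R = ker φ`, the fundamental group of the open Fermat curve of exponent `n`. -/
abbrev R (n : ℕ) : Subgroup F2 := (phi n).ker

theorem pow_n_mem (n : ℕ) (x : F2) : x ^ n ∈ R n := by
  rw [MonoidHom.mem_ker, map_pow]
  have h : n • Multiplicative.toAdd (phi n x) = 0 := by
    ext <;> simp [ZMod.natCast_self]
  calc (phi n x) ^ n
      = Multiplicative.ofAdd (n • Multiplicative.toAdd (phi n x)) := by
        rw [ofAdd_nsmul, ofAdd_toAdd]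
    _ = 1 := by rw [h]; rfl

theorem commutator_mem (n : ℕ) (x y : F2) : ⁅x, y⁆ ∈ R n := by
  rw [MonoidHom.mem_ker, map_commutatorElement, commutatorElement_eq_one_iff_commute]
  exact Commute.all _ _

theorem conj_mem (n : ℕ) (g x : F2) (hx : x ∈ R n) : g * x * g⁻¹ ∈ R n :=
  Subgroup.Normal.conj_mem inferInstance x hx g

/-- The abelianization `R^{ab} = R/R'` of the fundamental group `R`. -/
abbrev Ab (n : ℕ) : Type := Abelianization ↥(R n)

/-- The class `[x] ∈ R^{ab}` of an element `x ∈ R`. -/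
def cls (n : ℕ) (x : F2) (hx : x ∈ R n) : Ab n := Abelianization.of ⟨x, hx⟩

/-- The class `[g x g⁻¹] ∈ R^{ab}`; for `h = φ(g) ∈ H₀` this is the value `h·[x]` of the
conjugation action of `H₀` on `R^{ab}`. -/
def conjCl (n : ℕ) (g x : F2) (hx : x ∈ R n) : Ab n :=
  cls n (g * x * g⁻¹) (conj_mem n g x hx)

/-- The endomorphism of `R^{ab}` induced by conjugation by `g ∈ F₂`; for `h = φ(g)` this
is the action of `h ∈ H₀` on `R^{ab}`. -/
def conjHom (n : ℕ) (g : F2) : Ab n →* Ab n :=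
  Abelianization.map (MulAut.conjNormal g).toMonoidHom


/-- The `ℤ`-submodule (= subgroup) `Γ ⊆ R^{ab}` generated by the `3n` classes
`βⁱ·[aⁿ] = [bⁱaⁿb⁻ⁱ]`, `αⁱ·[bⁿ] = [aⁱbⁿa⁻ⁱ]` and `αⁱ·[(ab)ⁿ] = [aⁱ(ab)ⁿa⁻ⁱ]`,
for `0 ≤ i ≤ n-1`. -/
def Gam (n : ℕ) : Subgroup (Ab n) :=
  Subgroup.closure {z : Ab n | ∃ i : Fin n,
    z = conjCl n (b ^ (i : ℕ)) (a ^ n) (pow_n_mem n a) ∨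
    z = conjCl n (a ^ (i : ℕ)) (b ^ n) (pow_n_mem n b) ∨
    z = conjCl n (a ^ (i : ℕ)) ((a * b) ^ n) (pow_n_mem n (a * b))}

section Part1
variable {n : ℕ}

theorem cls_mul (x y : F2) (hx : x ∈ R n) (hy : y ∈ R n) :
    cls n (x * y) (mul_mem hx hy) = cls n x hx * cls n y hy := by
  unfold cls
  rw [← map_mul]
  rfl

theorem cls_one : cls n 1 (one_mem _) = 1 := by
  unfold cls
  exact map_one _

theorem cls_congr (x y : F2) (hx : x ∈ R n) (h : x = y) :
    cls n x hx = cls n y (h ▸ hx) := by subst h; rfl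

theorem cls_inv (x : F2) (hx : x ∈ R n) :
    cls n x⁻¹ (inv_mem hx) = (cls n x hx)⁻¹ := by
  unfold cls
  rw [← map_inv]
  rfl

/-- conjugation by an element of `R` is trivial on the abelianization. -/
theorem conjCl_mem_left (r g x : F2) (hr : r ∈ R n) (hx : x ∈ R n) :
    conjCl n (r * g) x hx = conjCl n g x hx := by
  unfold conjCl
  have h1 : r * g * x * (r * g)⁻¹ = r * (g * x * g⁻¹) * r⁻¹ := by group
  rw [cls_congr _ _ _ h1, cls_mul _ _ (mul_mem hr (conj_mem n g x hx)) (inv_mem hr),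
      cls_mul _ _ hr (conj_mem n g x hx), cls_inv _ hr]
  rw [mul_comm (cls n r hr), mul_inv_cancel_right]

/-- the conjugation class only depends on `φ(g)`. -/
theorem conjCl_congr (g g' x : F2) (hx : x ∈ R n) (h : phi n g = phi n g') :
    conjCl n g x hx = conjCl n g' x hx := by
  have hm : g * g'⁻¹ ∈ R n := by
    rw [MonoidHom.mem_ker, map_mul, map_inv, h, mul_inv_cancel]
  have := conjCl_mem_left (g * g'⁻¹) g' x hm hx
  rwa [inv_mul_cancel_right] at this

end Part1
section Part2
variable {n : ℕ}

/-- The group algebra `ℤ[H₀]`. -/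
abbrev MA (n : ℕ) : Type := MonoidAlgebra ℤ (H0 n)

/-- `single h 1` in the group algebra. -/
noncomputable def sg (n : ℕ) (h : H0 n) : MA n := MonoidAlgebra.single h 1

theorem sg_mul (h h' : H0 n) : sg n h * sg n h' = sg n (h * h') := by
  unfold sg
  rw [MonoidAlgebra.single_mul_single, one_mul]

theorem sg_one : sg n 1 = 1 := rfl

/-- The Magnus group `H₀ ⋉ (ℤ[H₀] × ℤ[H₀])` encoding Fox derivatives. -/
@[ext]
structure Mg (n : ℕ) where
  h : H0 n
  x : MA n
  y : MA n

noncomputable instance : Mul (Mg n) :=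
  ⟨fun u v => ⟨u.h * v.h, u.x + sg n u.h * v.x, u.y + sg n u.h * v.y⟩⟩

noncomputable instance : One (Mg n) := ⟨⟨1, 0, 0⟩⟩

noncomputable instance : Inv (Mg n) :=
  ⟨fun u => ⟨u.h⁻¹, -(sg n u.h⁻¹ * u.x), -(sg n u.h⁻¹ * u.y)⟩⟩

theorem Mg.mul_def (u v : Mg n) :
    u * v = ⟨u.h * v.h, u.x + sg n u.h * v.x, u.y + sg n u.h * v.y⟩ := rfl

theorem Mg.one_def : (1 : Mg n) = ⟨1, 0, 0⟩ := rfl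

theorem Mg.inv_def (u : Mg n) :
    u⁻¹ = ⟨u.h⁻¹, -(sg n u.h⁻¹ * u.x), -(sg n u.h⁻¹ * u.y)⟩ := rfl

noncomputable instance : Group (Mg n) where
  mul_assoc u v w := by
    simp only [Mg.mul_def, ← sg_mul]
    ext1 <;> dsimp
    · exact mul_assoc _ _ _
    · ring
    · ring
  one_mul u := by
    simp only [Mg.mul_def, Mg.one_def, sg_one]
    ext1 <;> dsimp
    · exact one_mul _
    · ring
    · ring
  mul_one u := by
    simp only [Mg.mul_def, Mg.one_def, mul_one, mul_zero, add_zero]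
  inv_mul_cancel u := by
    simp only [Mg.mul_def, Mg.inv_def, Mg.one_def, inv_mul_cancel]
    ext1 <;> dsimp <;> ring

/-- The Magnus–Fox homomorphism `F₂ → Mg n`. -/
noncomputable def Phi (n : ℕ) : F2 →* Mg n :=
  FreeGroup.lift fun i =>
    if i = (0 : Fin 2) then ⟨Multiplicative.ofAdd ((1 : ZMod n), (0 : ZMod n)), 1, 0⟩
    else ⟨Multiplicative.ofAdd ((0 : ZMod n), (1 : ZMod n)), 0, 1⟩

/-- projection to `H₀` as a hom. -/
def MgFst (n : ℕ) : Mg n →* H0 n where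
  toFun u := u.h
  map_one' := rfl
  map_mul' _ _ := rfl

theorem Phi_h (w : F2) : (Phi n w).h = phi n w := by
  have : (MgFst n).comp (Phi n) = phi n := by
    apply FreeGroup.ext_hom
    intro i
    fin_cases i <;> simp [Phi, phi, MgFst]
  exact DFunLike.congr_fun this w

theorem Phi_a : Phi n a = ⟨Multiplicative.ofAdd ((1 : ZMod n), (0 : ZMod n)), 1, 0⟩ := by
  simp [Phi, a]

theorem Phi_b : Phi n b = ⟨Multiplicative.ofAdd ((0 : ZMod n), (1 : ZMod n)), 0, 1⟩ := by
  simp [Phi, b]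

/-- Fox derivative data as a hom on `R`. -/
noncomputable def DR (n : ℕ) : R n →* Multiplicative (MA n × MA n) where
  toFun r := Multiplicative.ofAdd ((Phi n r.1).x, (Phi n r.1).y)
  map_one' := by
    simp only [OneMemClass.coe_one, map_one]
    rfl
  map_mul' r s := by
    have hr : phi n r.1 = 1 := r.2
    simp only [Subgroup.coe_mul, map_mul, Mg.mul_def, Phi_h, hr, sg_one, one_mul]
    rfl

/-- The Fox derivative map on the abelianization. -/
noncomputable def D (n : ℕ) : Ab n →* Multiplicative (MA n × MA n) :=
  Abelianization.lift (DR n)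

theorem D_cls (x : F2) (hx : x ∈ R n) :
    D n (cls n x hx) = Multiplicative.ofAdd ((Phi n x).x, (Phi n x).y) := rfl

theorem D_conjCl (g x : F2) (hx : x ∈ R n) :
    D n (conjCl n g x hx) =
      Multiplicative.ofAdd (sg n (phi n g) * (Phi n x).x, sg n (phi n g) * (Phi n x).y) := by
  rw [conjCl, D_cls]
  have hx1 : (Phi n x).h = 1 := by rw [Phi_h]; exact hx
  have hg : (Phi n g).h = phi n g := Phi_h g
  have hginv : (Phi n g) * (Phi n g)⁻¹ = 1 := mul_inv_cancel _
  have h2 : (Phi n g).x + sg n (phi n g) * ((Phi n g)⁻¹).x = 0 := by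
    have := congrArg Mg.x hginv
    rw [Mg.mul_def, Mg.one_def] at this
    dsimp at this
    rwa [hg] at this
  have h3 : (Phi n g).y + sg n (phi n g) * ((Phi n g)⁻¹).y = 0 := by
    have := congrArg Mg.y hginv
    rw [Mg.mul_def, Mg.one_def] at this
    dsimp at this
    rwa [hg] at this
  have hmm : Phi n (g * x * g⁻¹) = Phi n g * Phi n x * (Phi n g)⁻¹ := by
    rw [map_mul, map_mul, map_inv]
  rw [hmm]
  simp only [Mg.mul_def, hx1, mul_one, hg]
  refine congrArg _ (Prod.ext ?_ ?_) <;> dsimp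
  · linear_combination h2
  · linear_combination h3

end Part2
section Part3
variable {n : ℕ}

/-- `α = φ(a)`. -/
def al (n : ℕ) : H0 n := Multiplicative.ofAdd ((1 : ZMod n), (0 : ZMod n))

/-- `β = φ(b)`. -/
def be (n : ℕ) : H0 n := Multiplicative.ofAdd ((0 : ZMod n), (1 : ZMod n))

theorem phi_a : phi n a = al n := by simp [phi, a, al]

theorem phi_b : phi n b = be n := by simp [phi, b, be]

/-- `σ_h(k) = 1 + h + ⋯ + h^(k-1)` in the group algebra. -/
noncomputable def sig (n : ℕ) (h : H0 n) (k : ℕ) : MA n :=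
  ∑ l ∈ Finset.range k, sg n (h ^ l)

theorem Mg_pow (u : Mg n) (k : ℕ) :
    u ^ k = ⟨u.h ^ k, sig n u.h k * u.x, sig n u.h k * u.y⟩ := by
  induction k with
  | zero => simp [Mg.one_def, sig, pow_zero]
  | succ k ih =>
    rw [pow_succ, ih, Mg.mul_def]
    have hs : sig n u.h k + sg n (u.h ^ k) = sig n u.h (k + 1) := by
      rw [sig, sig, Finset.sum_range_succ]
    ext1 <;> dsimp
    · rw [pow_succ]
    · rw [← hs, add_mul]
    · rw [← hs, add_mul]

theorem Phi_pow_a (k : ℕ) :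
    Phi n (a ^ k) = ⟨al n ^ k, sig n (al n) k, 0⟩ := by
  rw [map_pow, Phi_a]
  show Mg.mk (al n) 1 0 ^ k = _
  rw [Mg_pow]
  simp

theorem Phi_pow_b (k : ℕ) :
    Phi n (b ^ k) = ⟨be n ^ k, 0, sig n (be n) k⟩ := by
  rw [map_pow, Phi_b]
  show Mg.mk (be n) 0 1 ^ k = _
  rw [Mg_pow]
  simp

theorem Phi_ab : Phi n (a * b) = ⟨al n * be n, 1, sg n (al n)⟩ := by
  rw [map_mul, Phi_a, Phi_b, Mg.mul_def]
  simp [al, be]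

theorem Phi_pow_ab (k : ℕ) :
    Phi n ((a * b) ^ k) = ⟨(al n * be n) ^ k, sig n (al n * be n) k,
      sig n (al n * be n) k * sg n (al n)⟩ := by
  rw [map_pow, Phi_ab]
  show Mg.mk (al n * be n) 1 (sg n (al n)) ^ k = _
  rw [Mg_pow]
  simp

theorem Phi_comm :
    Phi n ⁅b, a⁆ = ⟨1, sg n (be n) - 1, 1 - sg n (al n)⟩ := by
  have hc : ⁅b, a⁆ = b * a * b⁻¹ * a⁻¹ := rfl
  have hBA : be n * al n * (be n)⁻¹ = al n := by
    rw [mul_comm (be n) (al n), mul_inv_cancel_right]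
  have e1 : Phi n b * Phi n a = ⟨be n * al n, sg n (be n), 1⟩ := by
    rw [Phi_a, Phi_b, Mg.mul_def]
    ext1 <;> dsimp <;> simp [al, be]
  have e2 : (Phi n b)⁻¹ = ⟨(be n)⁻¹, 0, -sg n ((be n)⁻¹)⟩ := by
    rw [Phi_b, Mg.inv_def]
    ext1 <;> dsimp <;> simp [al, be]
  have e3 : (Phi n a)⁻¹ = ⟨(al n)⁻¹, -sg n ((al n)⁻¹), 0⟩ := by
    rw [Phi_a, Mg.inv_def]
    ext1 <;> dsimp <;> simp [al, be]
  have e4 : (Mg.mk (n := n) (be n * al n) (sg n (be n)) 1) * ⟨(be n)⁻¹, 0, -sg n ((be n)⁻¹)⟩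
      = ⟨al n, sg n (be n), 1 - sg n (al n)⟩ := by
    rw [Mg.mul_def]
    ext1 <;> dsimp
    · exact hBA
    · ring
    · rw [mul_neg, sg_mul, hBA]; ring
  have e5 : (Mg.mk (n := n) (al n) (sg n (be n)) (1 - sg n (al n)))
      * ⟨(al n)⁻¹, -sg n ((al n)⁻¹), 0⟩ = ⟨1, sg n (be n) - 1, 1 - sg n (al n)⟩ := by
    rw [Mg.mul_def]
    ext1 <;> dsimp
    · exact mul_inv_cancel _
    · rw [mul_neg, sg_mul, mul_inv_cancel, sg_one]; ring
    · ring
  rw [hc, map_mul, map_mul, map_inv, map_inv, map_mul, e1, e2, e3, e4, e5]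

end Part3
section Part4

/-- The dual-functional coefficient table. -/
def Unat (n i0 j0 i q : ℕ) : ℤ :=
  if q + 1 = n then
    (if i + j0 + 3 ≤ n then 1 else 0)
      - (if i < i0 then (if i + j0 + 2 ≤ i0 then 1 else 0)
         else (if i + j0 + 2 ≤ n + i0 then 1 else 0))
      + (if i = i0 then 1 else 0)
  else ((if i = i0 then 1 else 0) - (if i + 1 = n then 1 else 0))
      * (if j0 < q then 1 else 0)

theorem sum_ind (m A B : ℕ) :
    ∑ l ∈ Finset.range m, (if A ≤ l ∧ l < B then (1 : ℤ) else 0)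
      = ((max (min B m) (min A m) : ℕ) : ℤ) - ((min A m : ℕ) : ℤ) := by
  induction m with
  | zero => simp
  | succ m ih =>
    rw [Finset.sum_range_succ, ih]
    split_ifs with h <;> push_cast <;> omega

theorem sum_sing (m t : ℕ) (c : ℤ) :
    ∑ l ∈ Finset.range m, (if l = t then c else 0) = if t < m then c else 0 := by
  rw [Finset.sum_ite_eq' (Finset.range m) t (fun _ => c)]
  simp [Finset.mem_range]

theorem mod_small (x n : ℕ) (h : x < 2 * n) : x % n = if x < n then x else x - n := by
  split_ifs with h'
  · exact Nat.mod_eq_of_lt h'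
  · rw [Nat.mod_eq_sub_mod (by omega), Nat.mod_eq_of_lt (by omega)]

section
variable {n i0 j0 : ℕ} (hn : 2 ≤ n) (hi0 : i0 + 1 < n) (hj0 : j0 + 2 < n)
include hn hi0 hj0

theorem identity1 {c : ℕ} (hc : c < n) :
    ∑ l ∈ Finset.range n, Unat n i0 j0 l c = 0 := by
  by_cases hcase : c + 1 = n
  · have hpt : ∀ l ∈ Finset.range n, Unat n i0 j0 l c =
        (if 0 ≤ l ∧ l < n - (j0 + 2) then (1:ℤ) else 0)
        - (if 0 ≤ l ∧ l < i0 - (j0 + 1) then (1:ℤ) else 0)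
        - (if i0 ≤ l ∧ l < (n + i0) - (j0 + 1) then (1:ℤ) else 0)
        + (if i0 ≤ l ∧ l < i0 + 1 then (1:ℤ) else 0) := by
      intro l hl
      simp only [Finset.mem_range] at hl
      simp only [Unat, hcase, if_pos rfl]
      split_ifs <;> omega
    rw [Finset.sum_congr rfl hpt]
    simp only [Finset.sum_add_distrib, Finset.sum_sub_distrib, sum_ind]
    push_cast
    omega
  · have hpt : ∀ l ∈ Finset.range n, Unat n i0 j0 l c =
        (if j0 < c then (1:ℤ) else 0) *
          ((if i0 ≤ l ∧ l < i0 + 1 then (1:ℤ) else 0)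
            - (if n - 1 ≤ l ∧ l < n then (1:ℤ) else 0)) := by
      intro l hl
      simp only [Finset.mem_range] at hl
      simp only [Unat, if_neg hcase]
      split_ifs <;> omega
    rw [Finset.sum_congr rfl hpt, ← Finset.mul_sum]
    simp only [Finset.sum_sub_distrib, sum_ind]
    have h0 : ((max (min (i0+1) n) (min i0 n) : ℕ) : ℤ) - ((min i0 n : ℕ) : ℤ)
        - (((max (min n n) (min (n-1) n) : ℕ) : ℤ) - ((min (n-1) n : ℕ) : ℤ)) = 0 := by
      push_cast
      omega
    rw [h0, mul_zero]

omit hn hi0 in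
theorem identity3 {i j : ℕ} (hi : i + 1 < n) (hj : j + 2 < n) :
    Unat n i0 j0 i (j+1) - Unat n i0 j0 i j
      = if i = i0 ∧ j = j0 then 1 else 0 := by
  simp only [Unat]
  split_ifs <;> omega

theorem identity2 {d : ℕ} (hd : d < n) :
    ∑ k ∈ Finset.range n, Unat n i0 j0 ((d + k) % n) k = 0 := by
  obtain ⟨m, rfl⟩ : ∃ m, n = m + 1 := ⟨n - 1, by omega⟩
  set k1 := (i0 + (m+1) - d) % (m+1) with hk1def
  set k2 := (m + (m+1) - d) % (m+1) with hk2def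
  have hk1 : k1 < m + 1 ∧ (k1 + d = i0 + (m+1) ∨ k1 + d = i0) := by
    rw [hk1def, mod_small _ _ (by omega)]
    constructor
    · split_ifs <;> omega
    · split_ifs <;> omega
  have hk2 : k2 < m + 1 ∧ (k2 + d = m + (m+1) ∨ k2 + d = m) := by
    rw [hk2def, mod_small _ _ (by omega)]
    constructor
    · split_ifs <;> omega
    · split_ifs <;> omega
  clear hk1def hk2def
  rw [Finset.sum_range_succ]
  -- the last row
  set r3 := (d + m) % (m+1) with hr3def
  have hr3 : r3 < m + 1 ∧ (r3 = d + m ∨ r3 + (m+1) = d + m) := by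
    rw [hr3def, mod_small _ _ (by omega)]
    constructor
    · split_ifs <;> omega
    · split_ifs <;> omega
  clear hr3def
  have hpt : ∀ k ∈ Finset.range m, Unat (m+1) i0 j0 ((d + k) % (m+1)) k =
      (if k = k1 then (if j0 < k1 then (1:ℤ) else 0) else 0)
        - (if k = k2 then (if j0 < k2 then (1:ℤ) else 0) else 0) := by
    intro k hk
    simp only [Finset.mem_range] at hk
    set r := (d + k) % (m+1) with hrdef
    have hr : r < m + 1 ∧ (r = d + k ∨ r + (m+1) = d + k) := by
      rw [hrdef, mod_small _ _ (by omega)]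
      constructor
      · split_ifs <;> omega
      · split_ifs <;> omega
    clear hrdef
    simp only [Unat]
    split_ifs <;> omega
  rw [Finset.sum_congr rfl hpt]
  simp only [Finset.sum_sub_distrib, sum_sing]
  simp only [Unat]
  split_ifs <;> omega

end
end Part4
section Part5
variable {n : ℕ}

/-- The index type of the basis. -/
abbrev Idx (n : ℕ) : Type := Fin (n - 1) × Fin (n - 2)

/-- The dual pairing functional on the group algebra. -/
noncomputable def Lm (n : ℕ) : MA n →+ (Idx n → ℤ) where
  toFun z := fun p => z.coeff.sum fun h c =>
    Unat n p.1 p.2 (Multiplicative.toAdd h).1.val (Multiplicative.toAdd h).2.val * c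
  map_zero' := by
    funext p
    exact Finsupp.sum_zero_index
  map_add' z w := by
    funext p
    exact Finsupp.sum_add_index' (fun h => mul_zero _) (fun h c1 c2 => mul_add _ _ _)

theorem Lm_single (h : H0 n) (p : Idx n) :
    Lm n (sg n h) p =
      Unat n p.1 p.2 (Multiplicative.toAdd h).1.val (Multiplicative.toAdd h).2.val := by
  have h0 := Finsupp.sum_single_index (a := h) (b := (1:ℤ))
    (h := fun h' c => Unat n p.1 p.2
      (Multiplicative.toAdd h').1.val (Multiplicative.toAdd h').2.val * c) (mul_zero _)
  rw [mul_one] at h0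
  exact h0

theorem Lm_sum_sg {K : ℕ} (g : ℕ → H0 n) (p : Idx n) :
    Lm n (∑ k ∈ Finset.range K, sg n (g k)) p =
      ∑ k ∈ Finset.range K, Unat n p.1 p.2
        (Multiplicative.toAdd (g k)).1.val (Multiplicative.toAdd (g k)).2.val := by
  rw [map_sum]
  rw [Finset.sum_apply]
  exact Finset.sum_congr rfl fun k _ => Lm_single _ _

theorem coord_albe (i l : ℕ) :
    Multiplicative.toAdd (al n ^ l * be n ^ i) = ((l : ZMod n), (i : ZMod n)) := by
  simp only [al, be, toAdd_mul, toAdd_pow, toAdd_ofAdd]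
  ext <;> simp

/-- The homomorphism `Ab n →* (ℤ^Idx)ₘ` given by pairing the Fox derivative with `Unat`. -/
noncomputable def g0 (n : ℕ) : Ab n →* Multiplicative (Idx n → ℤ) where
  toFun z := Multiplicative.ofAdd (Lm n (Multiplicative.toAdd (D n z)).1)
  map_one' := by
    have h : (Multiplicative.toAdd (D n (1 : Ab n))).1 = 0 := by rw [map_one]; rfl
    show Multiplicative.ofAdd _ = Multiplicative.ofAdd 0
    rw [h]
    try rw [map_zero]
  map_mul' z w := by
    have h : Multiplicative.toAdd (D n (z * w))
        = Multiplicative.toAdd (D n z) + Multiplicative.toAdd (D n w) := by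
      rw [map_mul]
      rfl
    show Multiplicative.ofAdd _ = _
    rw [h]
    have h2 : (Multiplicative.toAdd (D n z) + Multiplicative.toAdd (D n w)).1
        = (Multiplicative.toAdd (D n z)).1 + (Multiplicative.toAdd (D n w)).1 := rfl
    rw [h2, map_add, ofAdd_add]
    try rfl

section
variable (hn : 2 ≤ n)
include hn

theorem g0_gen1 (i : ℕ) (hi : i < n) :
    g0 n (conjCl n (b ^ i) (a ^ n) (pow_n_mem n a)) = 1 := by
  haveI : NeZero n := ⟨by omega⟩
  have h1 : phi n (b ^ i) = be n ^ i := by rw [map_pow, phi_b]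
  have h2 : (Phi n (a ^ n)).x = sig n (al n) n := by rw [Phi_pow_a]
  have key : sg n (be n ^ i) * sig n (al n) n
      = ∑ l ∈ Finset.range n, sg n (al n ^ l * be n ^ i) := by
    rw [sig, Finset.mul_sum]
    exact Finset.sum_congr rfl fun l _ => by rw [sg_mul, mul_comm]
  rw [g0]
  simp only [MonoidHom.coe_mk, OneHom.coe_mk, D_conjCl, toAdd_ofAdd, h1, h2, key]
  rw [← ofAdd_zero]
  congr 1
  funext p
  rw [Lm_sum_sg]
  have : ∀ l ∈ Finset.range n, Unat n p.1 p.2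
      (Multiplicative.toAdd (al n ^ l * be n ^ i)).1.val
      (Multiplicative.toAdd (al n ^ l * be n ^ i)).2.val
      = Unat n p.1 p.2 l i := by
    intro l hl
    simp only [Finset.mem_range] at hl
    rw [coord_albe, ZMod.val_cast_of_lt hl, ZMod.val_cast_of_lt hi]
  rw [Finset.sum_congr rfl this]
  exact identity1 hn (by omega) (by omega) hi
  
theorem g0_gen2 (i : ℕ) :
    g0 n (conjCl n (a ^ i) (b ^ n) (pow_n_mem n b)) = 1 := by
  rw [g0]
  simp only [MonoidHom.coe_mk, OneHom.coe_mk, D_conjCl, toAdd_ofAdd]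
  have h2 : (Phi n (b ^ n)).x = 0 := by rw [Phi_pow_b]
  rw [h2, mul_zero, map_zero]
  rfl

theorem g0_gen3 (d : ℕ) (hd : d < n) :
    g0 n (conjCl n (a ^ d) ((a * b) ^ n) (pow_n_mem n (a * b))) = 1 := by
  haveI : NeZero n := ⟨by omega⟩
  have h1 : phi n (a ^ d) = al n ^ d := by rw [map_pow, phi_a]
  have h2 : (Phi n ((a * b) ^ n)).x = sig n (al n * be n) n := by rw [Phi_pow_ab]
  have key : sg n (al n ^ d) * sig n (al n * be n) n
      = ∑ k ∈ Finset.range n, sg n (al n ^ (d + k) * be n ^ k) := by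
    rw [sig, Finset.mul_sum]
    refine Finset.sum_congr rfl fun k _ => ?_
    rw [sg_mul, mul_pow, pow_add, mul_assoc]
  rw [g0]
  simp only [MonoidHom.coe_mk, OneHom.coe_mk, D_conjCl, toAdd_ofAdd, h1, h2, key]
  rw [← ofAdd_zero]
  congr 1
  funext p
  rw [Lm_sum_sg]
  have : ∀ k ∈ Finset.range n, Unat n p.1 p.2
      (Multiplicative.toAdd (al n ^ (d + k) * be n ^ k)).1.val
      (Multiplicative.toAdd (al n ^ (d + k) * be n ^ k)).2.val
      = Unat n p.1 p.2 ((d + k) % n) k := by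
    intro k hk
    simp only [Finset.mem_range] at hk
    rw [coord_albe, ZMod.val_natCast, ZMod.val_cast_of_lt hk]
  rw [Finset.sum_congr rfl this]
  exact identity2 hn (by omega) (by omega) hd

theorem g0_basis (p' : Idx n) :
    g0 n (conjCl n (a ^ (p'.1 : ℕ) * b ^ (p'.2 : ℕ)) ⁅b, a⁆ (commutator_mem n b a))
      = Multiplicative.ofAdd (Pi.single p' 1) := by
  haveI : NeZero n := ⟨by omega⟩
  have hn1 : (n : ℕ) - 1 < n := by omega
  have hn2 : (n : ℕ) - 2 < n := by omega
  have hi' : (p'.1 : ℕ) + 1 < n := by have := p'.1.2; omega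
  have hj' : (p'.2 : ℕ) + 2 < n := by have := p'.2.2; omega
  have h1 : phi n (a ^ (p'.1 : ℕ) * b ^ (p'.2 : ℕ)) = al n ^ (p'.1 : ℕ) * be n ^ (p'.2 : ℕ) := by
    rw [map_mul, map_pow, map_pow, phi_a, phi_b]
  have h2 : (Phi n ⁅b, a⁆).x = sg n (be n) - 1 := by rw [Phi_comm]
  have key : sg n (al n ^ (p'.1 : ℕ) * be n ^ (p'.2 : ℕ)) * (sg n (be n) - 1)
      = sg n (al n ^ (p'.1 : ℕ) * be n ^ ((p'.2 : ℕ) + 1))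
        - sg n (al n ^ (p'.1 : ℕ) * be n ^ (p'.2 : ℕ)) := by
    rw [mul_sub, mul_one, sg_mul, mul_assoc, ← pow_succ]
  rw [g0]
  simp only [MonoidHom.coe_mk, OneHom.coe_mk, D_conjCl, toAdd_ofAdd, h1, h2, key]
  congr 1
  funext p
  rw [map_sub]
  have e1 : ∀ (j : ℕ), j < n → Lm n (sg n (al n ^ (p'.1 : ℕ) * be n ^ j)) p
      = Unat n p.1 p.2 (p'.1 : ℕ) j := by
    intro j hj
    rw [Lm_single, coord_albe, ZMod.val_cast_of_lt (by omega), ZMod.val_cast_of_lt hj]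
  rw [Pi.sub_apply, e1 _ (by omega), e1 _ (by omega)]
  rw [identity3 (n := n) (by omega) hi' hj', Pi.single_apply]
  by_cases hpq : p = p'
  · subst hpq
    rw [if_pos ⟨rfl, rfl⟩, if_pos rfl]
  · rw [if_neg (fun hc => hpq (Prod.ext (Fin.ext hc.1.symm) (Fin.ext hc.2.symm))), if_neg hpq]

end
end Part5
section Part6
variable {n : ℕ}

/-- The basis candidate family. -/
noncomputable def vB (n : ℕ) (p : Idx n) : Additive (Ab n ⧸ Gam n) :=
  Additive.ofMul (QuotientGroup.mk
    (conjCl n (a ^ (p.1 : ℕ) * b ^ (p.2 : ℕ)) ⁅b, a⁆ (commutator_mem n b a)))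

section
variable (hn : 2 ≤ n)
include hn

theorem gam_le_ker : Gam n ≤ (g0 n).ker := by
  rw [Gam, Subgroup.closure_le]
  rintro z ⟨i, hi | hi | hi⟩ <;> subst hi <;> simp only [SetLike.mem_coe, MonoidHom.mem_ker]
  · exact g0_gen1 hn i i.2
  · exact g0_gen2 hn i
  · exact g0_gen3 hn i i.2

/-- The quotiented pairing hom. -/
noncomputable def g1 (hn : 2 ≤ n) : Ab n ⧸ Gam n →* Multiplicative (Idx n → ℤ) :=
  QuotientGroup.lift (Gam n) (g0 n) (gam_le_ker hn)

/-- The final linear functional. -/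
noncomputable def fL (hn : 2 ≤ n) : Additive (Ab n ⧸ Gam n) →ₗ[ℤ] (Idx n → ℤ) :=
  (AddMonoidHom.toMultiplicativeRight.symm (g1 hn)).toIntLinearMap

theorem fL_vB (p : Idx n) : fL hn (vB n p) = Pi.single p 1 := by
  show Multiplicative.toAdd ((g1 hn) (QuotientGroup.mk _)) = _
  rw [g1, QuotientGroup.lift_mk', g0_basis hn p]
  rfl

theorem vB_linearIndependent : LinearIndependent ℤ (vB n) := by
  apply LinearIndependent.of_comp (fL hn)
  have he : (fL hn) ∘ (vB n) = fun p => Pi.single p 1 := by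
    funext p
    exact fL_vB hn p
  rw [he]
  have := (Pi.basisFun ℤ (Idx n)).linearIndependent
  have he2 : ⇑(Pi.basisFun ℤ (Idx n)) = fun p : Idx n => Pi.single p 1 := by
    funext p
    exact Pi.basisFun_apply ℤ (Idx n) p
  rwa [he2] at this

end
end Part6
section Part7
variable {n : ℕ}

theorem memcomm (u v : F2) : u * v * u⁻¹ * v⁻¹ ∈ R n := by
  rw [MonoidHom.mem_ker]
  simp only [map_mul, map_inv]
  rw [mul_comm (phi n u) (phi n v)]
  group

theorem conjCl_def (g x : F2) (hx : x ∈ R n) :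
    conjCl n g x hx = cls n (g * x * g⁻¹) (conj_mem n g x hx) := rfl

theorem conjCl_mul (g x y : F2) (hx : x ∈ R n) (hy : y ∈ R n) :
    conjCl n g (x * y) (mul_mem hx hy) = conjCl n g x hx * conjCl n g y hy := by
  rw [conjCl_def, conjCl_def, conjCl_def,
    cls_congr _ ((g * x * g⁻¹) * (g * y * g⁻¹)) _ (by group)]
  exact cls_mul _ _ (conj_mem n g x hx) (conj_mem n g y hy)

theorem conjCl_inv (g x : F2) (hx : x ∈ R n) :
    conjCl n g x⁻¹ (inv_mem hx) = (conjCl n g x hx)⁻¹ := by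
  rw [conjCl_def, conjCl_def, cls_congr _ ((g * x * g⁻¹)⁻¹) _ (by group)]
  exact cls_inv _ _

theorem conjCl_comp (g h x : F2) (hx : x ∈ R n) :
    conjCl n (g * h) x hx = conjCl n g (h * x * h⁻¹) (conj_mem n h x hx) := by
  rw [conjCl_def, conjCl_def]
  exact cls_congr _ _ _ (by group)

theorem conjCl_one_right (g : F2) : conjCl n g 1 (one_mem _) = 1 := by
  rw [conjCl_def, cls_congr _ 1 _ (by group)]
  exact cls_one

theorem cls_eq_conjCl_one (x : F2) (hx : x ∈ R n) :
    cls n x hx = conjCl n 1 x hx := by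
  rw [conjCl_def]
  exact cls_congr _ _ _ (by group)

theorem memA (x gg : F2) (hx : x ∈ R n) (k : ℕ) :
    (x * gg) ^ k * (gg ^ k)⁻¹ ∈ R n := by
  rw [MonoidHom.mem_ker]
  simp only [map_mul, map_inv, map_pow]
  rw [MonoidHom.mem_ker] at hx
  rw [hx, one_mul, mul_inv_cancel]

theorem lemA (x gg : F2) (hx : x ∈ R n) (k : ℕ) :
    cls n ((x * gg) ^ k * (gg ^ k)⁻¹) (memA x gg hx k)
      = ∏ i ∈ Finset.range k, conjCl n (gg ^ i) x hx := by
  induction k with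
  | zero =>
    rw [Finset.range_zero, Finset.prod_empty, cls_congr _ 1 _ (by group)]
    exact cls_one
  | succ k ih =>
    have hword : (x * gg) ^ (k+1) * (gg ^ (k+1))⁻¹
        = ((x * gg) ^ k * (gg ^ k)⁻¹) * (gg ^ k * x * (gg ^ k)⁻¹) := by
      rw [pow_succ (x * gg), pow_succ gg, mul_inv_rev]
      group
    rw [cls_congr _ _ _ hword,
      cls_mul _ _ (memA x gg hx k) (conj_mem n (gg ^ k) x hx), ih,
      Finset.prod_range_succ]
    rfl

theorem lemAc (w x gg : F2) (hx : x ∈ R n) (k : ℕ) :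
    cls n (w * ((x * gg) ^ k * (gg ^ k)⁻¹) * w⁻¹)
        (conj_mem n w _ (memA x gg hx k))
      = ∏ i ∈ Finset.range k, conjCl n (w * gg ^ i) x hx := by
  have hx' : w * x * w⁻¹ ∈ R n := conj_mem n w x hx
  have hword : ((w * x * w⁻¹) * (w * gg * w⁻¹)) ^ k * ((w * gg * w⁻¹) ^ k)⁻¹
      = w * ((x * gg) ^ k * (gg ^ k)⁻¹) * w⁻¹ := by
    have h1 : (w * x * w⁻¹) * (w * gg * w⁻¹) = w * (x * gg) * w⁻¹ := by group
    rw [h1, conj_pow, conj_pow]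
    group
  have := lemA (w * x * w⁻¹) (w * gg * w⁻¹) hx' k
  rw [cls_congr _ _ _ hword] at this
  rw [this]
  refine Finset.prod_congr rfl fun i _ => ?_
  rw [conj_pow, conjCl_def, conjCl_def]
  exact cls_congr _ _ _ (by group)

end Part7
section Part8
variable {n : ℕ}

/-- The quotient class map `Ab n → Additive (Ab n ⧸ Γ)`. -/
def qq (n : ℕ) (z : Ab n) : Additive (Ab n ⧸ Gam n) :=
  Additive.ofMul (QuotientGroup.mk' (Gam n) z)

theorem qq_mul (z w : Ab n) : qq n (z * w) = qq n z + qq n w := by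
  unfold qq
  rw [map_mul]
  rfl

theorem qq_one : qq n (1 : Ab n) = 0 := by
  unfold qq
  rw [map_one]
  rfl

theorem qq_inv (z : Ab n) : qq n z⁻¹ = -qq n z := by
  unfold qq
  rw [map_inv]
  rfl

theorem qq_gam {z : Ab n} (hz : z ∈ Gam n) : qq n z = 0 := by
  unfold qq
  have h : (QuotientGroup.mk' (Gam n)) z = 1 := (QuotientGroup.eq_one_iff z).mpr hz
  rw [h]
  rfl

theorem qq_prod {ι : Type} (s : Finset ι) (f : ι → Ab n) :
    qq n (∏ i ∈ s, f i) = ∑ i ∈ s, qq n (f i) := by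
  classical
  induction s using Finset.induction with
  | empty => simpa using qq_one
  | insert _ _ h ih => rw [Finset.prod_insert h, Finset.sum_insert h, qq_mul, ih]

theorem al_pow_n : (al n) ^ n = 1 := by
  rw [al, ← ofAdd_nsmul]
  have h : n • ((1 : ZMod n), (0 : ZMod n)) = 0 := by
    ext <;> simp [ZMod.natCast_self]
  rw [h]
  rfl

theorem be_pow_n : (be n) ^ n = 1 := by
  rw [be, ← ofAdd_nsmul]
  have h : n • ((0 : ZMod n), (1 : ZMod n)) = 0 := by
    ext <;> simp [ZMod.natCast_self]
  rw [h]
  rfl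

theorem conjCl_congr_word (g x y : F2) (hx : x ∈ R n) (h : x = y) :
    conjCl n g x hx = conjCl n g y (h ▸ hx) := by subst h; rfl

section
variable (hn : 2 ≤ n)
include hn

theorem gamA (j : ℕ) : qq n (conjCl n (b ^ j) (a ^ n) (pow_n_mem n a)) = 0 := by
  have hb : phi n (b ^ j) = phi n (b ^ (j % n)) := by
    rw [map_pow, map_pow, phi_b, pow_eq_pow_mod j be_pow_n]
  rw [conjCl_congr _ _ _ _ hb]
  exact qq_gam (Subgroup.subset_closure ⟨⟨j % n, Nat.mod_lt j (by omega)⟩, Or.inl rfl⟩)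

theorem gamB (i : ℕ) : qq n (conjCl n (a ^ i) (b ^ n) (pow_n_mem n b)) = 0 := by
  have ha : phi n (a ^ i) = phi n (a ^ (i % n)) := by
    rw [map_pow, map_pow, phi_a, pow_eq_pow_mod i al_pow_n]
  rw [conjCl_congr _ _ _ _ ha]
  exact qq_gam (Subgroup.subset_closure
    ⟨⟨i % n, Nat.mod_lt i (by omega)⟩, Or.inr (Or.inl rfl)⟩)

theorem gamC (i : ℕ) : qq n (conjCl n (a ^ i) ((a * b) ^ n) (pow_n_mem n (a * b))) = 0 := by
  have ha : phi n (a ^ i) = phi n (a ^ (i % n)) := by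
    rw [map_pow, map_pow, phi_a, pow_eq_pow_mod i al_pow_n]
  rw [conjCl_congr _ _ _ _ ha]
  exact qq_gam (Subgroup.subset_closure
    ⟨⟨i % n, Nat.mod_lt i (by omega)⟩, Or.inr (Or.inr rfl)⟩)

end

/-- decompose any `φ(g)` as `φ(aⁱbʲ)` with `i j < n`. -/
theorem phi_decomp' (hn : 2 ≤ n) (g : F2) :
    ∃ i j : ℕ, i < n ∧ j < n ∧ phi n g = phi n (a ^ i * b ^ j) := by
  haveI : NeZero n := ⟨by omega⟩
  refine ⟨(Multiplicative.toAdd (phi n g)).1.val, (Multiplicative.toAdd (phi n g)).2.val,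
    ZMod.val_lt _, ZMod.val_lt _, ?_⟩
  rw [map_mul, map_pow, map_pow, phi_a, phi_b]
  have h1 : al n ^ (Multiplicative.toAdd (phi n g)).1.val
        * be n ^ (Multiplicative.toAdd (phi n g)).2.val
      = Multiplicative.ofAdd (((Multiplicative.toAdd (phi n g)).1.val : ZMod n),
          ((Multiplicative.toAdd (phi n g)).2.val : ZMod n)) := by
    rw [al, be, ← ofAdd_nsmul, ← ofAdd_nsmul, ← ofAdd_add]
    congr 1
    ext <;> simp
  rw [h1]
  have h2 : ∀ s : ZMod n, ((s.val : ZMod n)) = s := fun s => ZMod.natCast_rightInverse s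
  rw [h2, h2]
  rfl

section
variable (hn : 2 ≤ n)
include hn

theorem gamA' (g : F2) : qq n (conjCl n g (a ^ n) (pow_n_mem n a)) = 0 := by
  obtain ⟨i, j, hi, hj, hphi⟩ := phi_decomp' hn g
  rw [conjCl_congr _ _ _ _ hphi]
  have hcomm : phi n (a ^ i * b ^ j) = phi n (b ^ j * a ^ i) := by
    rw [map_mul, map_mul, mul_comm]
  rw [conjCl_congr _ _ _ _ hcomm, conjCl_comp,
    conjCl_congr_word _ _ (a ^ n) _ (by group)]
  exact gamA hn j

theorem gamB' (g : F2) : qq n (conjCl n g (b ^ n) (pow_n_mem n b)) = 0 := by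
  obtain ⟨i, j, hi, hj, hphi⟩ := phi_decomp' hn g
  rw [conjCl_congr _ _ _ _ hphi, conjCl_comp,
    conjCl_congr_word _ _ (b ^ n) _ (by group)]
  exact gamB hn i

theorem gamC' (g : F2) : qq n (conjCl n g ((a * b) ^ n) (pow_n_mem n (a * b))) = 0 := by
  obtain ⟨i, j, hi, hj, hphi⟩ := phi_decomp' hn g
  rw [conjCl_congr _ _ _ _ hphi]
  clear hphi hi hj
  induction j generalizing i with
  | zero =>
    have h0 : phi n (a ^ i * b ^ 0) = phi n (a ^ i) := by
      rw [pow_zero, mul_one]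
    rw [conjCl_congr _ _ _ _ h0]
    exact gamC hn i
  | succ j ih =>
    have hsplit : phi n (a ^ i * b ^ (j+1)) = phi n ((a ^ i * b ^ j) * b) := by
      rw [pow_succ, mul_assoc]
    rw [conjCl_congr _ _ _ _ hsplit, conjCl_comp]
    have hkey : b * (a * b) ^ n * b⁻¹ = a⁻¹ * (a * b) ^ n * a⁻¹⁻¹ := by
      have h1 : b * (a * b) ^ n * b⁻¹ = (b * (a * b) * b⁻¹) ^ n := conj_pow.symm
      have h2 : a⁻¹ * (a * b) ^ n * a⁻¹⁻¹ = (a⁻¹ * (a * b) * a⁻¹⁻¹) ^ n := conj_pow.symm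
      rw [h1, h2]
      congr 1
      group
    rw [conjCl_congr_word _ _ _ _ hkey, ← conjCl_comp]
    have hshift : phi n (a ^ i * b ^ j * a⁻¹) = phi n (a ^ (i + (n-1)) * b ^ j) := by
      simp only [map_mul, map_pow, map_inv, phi_a, phi_b]
      have h3 : al n ^ (i + (n-1)) = al n ^ i * (al n)⁻¹ := by
        rw [pow_add]
        congr 1
        have h4 : al n ^ (n-1) * al n = 1 := by
          rw [← pow_succ]
          have : n - 1 + 1 = n := by omega
          rw [this]
          exact al_pow_n
        exact eq_inv_of_mul_eq_one_left h4
      rw [h3, mul_right_comm]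
    rw [conjCl_congr _ _ _ _ hshift]
    exact ih _

end
end Part8
section Part9
variable {n : ℕ}

/-- conjugated commutator class `αⁱβʲ·[b,a]`. -/
def Ycl (n : ℕ) (i j : ℕ) : Ab n :=
  conjCl n (a ^ i * b ^ j) ⁅b, a⁆ (commutator_mem n b a)

/-- its image in the quotient. -/
def yqv (n : ℕ) (i j : ℕ) : Additive (Ab n ⧸ Gam n) := qq n (Ycl n i j)

/-- span of the candidate basis. -/
noncomputable def Vsp (n : ℕ) : Submodule ℤ (Additive (Ab n ⧸ Gam n)) :=
  Submodule.span ℤ (Set.range (vB n))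

theorem sum_split {M : Type} [AddCommGroup M] (N : ℕ) (hN : 0 < N) (f : ℕ → M) :
    ∑ i ∈ Finset.range N, f i = (∑ i ∈ Finset.range (N - 1), f i) + f (N - 1) := by
  obtain ⟨m, rfl⟩ : ∃ m, N = m + 1 := ⟨N - 1, by omega⟩
  simp [Finset.sum_range_succ]

theorem yq_mod (i j : ℕ) : yqv n i j = yqv n (i % n) (j % n) := by
  have h : phi n (a ^ i * b ^ j) = phi n (a ^ (i % n) * b ^ (j % n)) := by
    simp only [map_mul, map_pow, phi_a, phi_b]
    rw [pow_eq_pow_mod i al_pow_n, pow_eq_pow_mod j be_pow_n]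
  unfold yqv Ycl
  rw [conjCl_congr _ _ _ _ h]

theorem yq_addn (i j : ℕ) : yqv n (i + n) j = yqv n i j := by
  rw [yq_mod, Nat.add_mod_right, ← yq_mod]

section
variable (hn : 2 ≤ n)
include hn

theorem base_mem (i j : ℕ) (hi : i < n - 1) (hj : j < n - 2) : yqv n i j ∈ Vsp n :=
  Submodule.subset_span ⟨(⟨i, hi⟩, ⟨j, hj⟩), rfl⟩

theorem rel1 (j : ℕ) : ∑ i ∈ Finset.range n, yqv n i j = 0 := by
  have h := lemAc (n := n) (b ^ j) ⁅b, a⁆ a (commutator_mem n b a) n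
  have hq := congrArg (qq n) h
  rw [qq_prod] at hq
  have hterm : ∀ i ∈ Finset.range n,
      qq n (conjCl n (b ^ j * a ^ i) ⁅b, a⁆ (commutator_mem n b a)) = yqv n i j := by
    intro i _
    unfold yqv Ycl
    rw [conjCl_congr _ (a ^ i * b ^ j) _ _ (by rw [map_mul, map_mul, mul_comm])]
  rw [Finset.sum_congr rfl hterm] at hq
  have hword : b ^ j * ((⁅b, a⁆ * a) ^ n * (a ^ n)⁻¹) * (b ^ j)⁻¹
      = (b ^ (j+1) * a ^ n * (b ^ (j+1))⁻¹) * (b ^ j * (a ^ n)⁻¹ * (b ^ j)⁻¹) := by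
    have hw : ⁅b, a⁆ * a = b * a * b⁻¹ := by group
    rw [hw, conj_pow]
    rw [pow_succ b, mul_inv_rev]
    group
  rw [cls_congr _ _ _ hword,
    cls_mul _ _ (conj_mem n (b ^ (j+1)) (a ^ n) (pow_n_mem n a))
      (conj_mem n (b ^ j) (a ^ n)⁻¹ (inv_mem (pow_n_mem n a))),
    qq_mul] at hq
  have h1 : qq n (cls n (b ^ (j+1) * a ^ n * (b ^ (j+1))⁻¹)
      (conj_mem n (b ^ (j+1)) (a ^ n) (pow_n_mem n a))) = 0 := gamA hn (j+1)
  have h2 : qq n (cls n (b ^ j * (a ^ n)⁻¹ * (b ^ j)⁻¹)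
      (conj_mem n (b ^ j) (a ^ n)⁻¹ (inv_mem (pow_n_mem n a)))) = 0 := by
    have := conjCl_inv (n := n) (b ^ j) (a ^ n) (pow_n_mem n a)
    rw [conjCl_def] at this
    rw [this, qq_inv, gamA hn j, neg_zero]
  rw [h1, h2, add_zero] at hq
  exact hq.symm

theorem rel2 (i : ℕ) : ∑ j ∈ Finset.range n, yqv n i j = 0 := by
  have h := lemAc (n := n) (a ^ i) ⁅a, b⁆ b (commutator_mem n a b) n
  have hq := congrArg (qq n) h
  rw [qq_prod] at hq
  have hterm : ∀ l ∈ Finset.range n,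
      qq n (conjCl n (a ^ i * b ^ l) ⁅a, b⁆ (commutator_mem n a b)) = - yqv n i l := by
    intro l _
    unfold yqv Ycl
    rw [conjCl_congr_word _ _ (⁅b, a⁆⁻¹) _ (by group), conjCl_inv, qq_inv]
  rw [Finset.sum_congr rfl hterm, Finset.sum_neg_distrib] at hq
  have hword : a ^ i * ((⁅a, b⁆ * b) ^ n * (b ^ n)⁻¹) * (a ^ i)⁻¹
      = (a ^ (i+1) * b ^ n * (a ^ (i+1))⁻¹) * (a ^ i * (b ^ n)⁻¹ * (a ^ i)⁻¹) := by
    have hw : ⁅a, b⁆ * b = a * b * a⁻¹ := by group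
    rw [hw, conj_pow]
    rw [pow_succ a, mul_inv_rev]
    group
  rw [cls_congr _ _ _ hword,
    cls_mul _ _ (conj_mem n (a ^ (i+1)) (b ^ n) (pow_n_mem n b))
      (conj_mem n (a ^ i) (b ^ n)⁻¹ (inv_mem (pow_n_mem n b))),
    qq_mul] at hq
  have h1 : qq n (cls n (a ^ (i+1) * b ^ n * (a ^ (i+1))⁻¹)
      (conj_mem n (a ^ (i+1)) (b ^ n) (pow_n_mem n b))) = 0 := gamB hn (i+1)
  have h2 : qq n (cls n (a ^ i * (b ^ n)⁻¹ * (a ^ i)⁻¹)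
      (conj_mem n (a ^ i) (b ^ n)⁻¹ (inv_mem (pow_n_mem n b)))) = 0 := by
    have := conjCl_inv (n := n) (a ^ i) (b ^ n) (pow_n_mem n b)
    rw [conjCl_def] at this
    rw [this, qq_inv, gamB hn i, neg_zero]
  rw [h1, h2, add_zero] at hq
  rw [← neg_eq_zero]
  exact hq.symm

theorem rel3 (d : ℕ) : ∑ k ∈ Finset.range n, yqv n (d + k) k = 0 := by
  have h := lemAc (n := n) (a ^ d) ⁅b, a⁆ (a * b) (commutator_mem n b a) n
  have hq := congrArg (qq n) h
  rw [qq_prod] at hq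
  have hterm : ∀ k ∈ Finset.range n,
      qq n (conjCl n (a ^ d * (a * b) ^ k) ⁅b, a⁆ (commutator_mem n b a)) = yqv n (d + k) k := by
    intro k _
    unfold yqv Ycl
    rw [conjCl_congr _ (a ^ (d + k) * b ^ k) _ _ ?_]
    simp only [map_mul, map_pow, phi_a, phi_b]
    rw [mul_pow, ← mul_assoc, ← pow_add]
  rw [Finset.sum_congr rfl hterm] at hq
  have hword : a ^ d * ((⁅b, a⁆ * (a * b)) ^ n * ((a * b) ^ n)⁻¹) * (a ^ d)⁻¹
      = ((a ^ d * a⁻¹) * (a * b) ^ n * (a ^ d * a⁻¹)⁻¹)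
        * (a ^ d * ((a * b) ^ n)⁻¹ * (a ^ d)⁻¹) := by
    have hw : ⁅b, a⁆ * (a * b) = a⁻¹ * (a * b) * a⁻¹⁻¹ := by group
    rw [hw, conj_pow]
    group
  rw [cls_congr _ _ _ hword,
    cls_mul _ _ (conj_mem n (a ^ d * a⁻¹) ((a * b) ^ n) (pow_n_mem n (a * b)))
      (conj_mem n (a ^ d) ((a * b) ^ n)⁻¹ (inv_mem (pow_n_mem n (a * b)))),
    qq_mul] at hq
  have h1 : qq n (cls n ((a ^ d * a⁻¹) * (a * b) ^ n * (a ^ d * a⁻¹)⁻¹)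
      (conj_mem n (a ^ d * a⁻¹) ((a * b) ^ n) (pow_n_mem n (a * b)))) = 0 :=
    gamC' hn (a ^ d * a⁻¹)
  have h2 : qq n (cls n (a ^ d * ((a * b) ^ n)⁻¹ * (a ^ d)⁻¹)
      (conj_mem n (a ^ d) ((a * b) ^ n)⁻¹ (inv_mem (pow_n_mem n (a * b))))) = 0 := by
    have := conjCl_inv (n := n) (a ^ d) ((a * b) ^ n) (pow_n_mem n (a * b))
    rw [conjCl_def] at this
    rw [this, qq_inv, gamC hn d, neg_zero]
  rw [h1, h2, add_zero] at hq
  exact hq.symm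

omit hn in
theorem memE (K : ℕ) : (a * b) ^ K * (b ^ K)⁻¹ * (a ^ K)⁻¹ ∈ R n := by
  rw [MonoidHom.mem_ker]
  simp only [map_mul, map_inv, map_pow]
  rw [mul_pow]
  group

omit hn in
theorem lemFq (w : F2) (j : ℕ) :
    qq n (cls n (w * (b ^ j * a * (b ^ j)⁻¹ * a⁻¹) * w⁻¹)
        (conj_mem n w _ (memcomm (b ^ j) a)))
      = ∑ l ∈ Finset.range j,
          qq n (conjCl n (w * b ^ l) ⁅b, a⁆ (commutator_mem n b a)) := by
  induction j with
  | zero =>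
    rw [Finset.range_zero, Finset.sum_empty, cls_congr _ 1 _ (by group), cls_one, qq_one]
  | succ j ih =>
    have hword : w * (b ^ (j+1) * a * (b ^ (j+1))⁻¹ * a⁻¹) * w⁻¹
        = (w * (b ^ j * ⁅b, a⁆ * (b ^ j)⁻¹) * w⁻¹)
          * (w * (b ^ j * a * (b ^ j)⁻¹ * a⁻¹) * w⁻¹) := by
      have hc : ⁅b, a⁆ = b * a * b⁻¹ * a⁻¹ := rfl
      rw [hc, pow_succ b, mul_inv_rev]
      group
    rw [cls_congr _ _ _ hword,
      cls_mul _ _ (conj_mem n w _ (conj_mem n (b ^ j) ⁅b, a⁆ (commutator_mem n b a)))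
        (conj_mem n w _ (memcomm (b ^ j) a)),
      qq_mul, ih, Finset.sum_range_succ]
    have hfirst : cls n (w * (b ^ j * ⁅b, a⁆ * (b ^ j)⁻¹) * w⁻¹)
        (conj_mem n w _ (conj_mem n (b ^ j) ⁅b, a⁆ (commutator_mem n b a)))
        = conjCl n (w * b ^ j) ⁅b, a⁆ (commutator_mem n b a) := by
      rw [conjCl_def]
      exact cls_congr _ _ _ (by group)
    rw [hfirst]
    exact add_comm _ _

omit hn in
theorem lemEq (K : ℕ) :
    qq n (cls n ((a * b) ^ K * (b ^ K)⁻¹ * (a ^ K)⁻¹) (memE K))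
      = ∑ k ∈ Finset.range K, ∑ l ∈ Finset.range k, yqv n k l := by
  induction K with
  | zero =>
    rw [Finset.range_zero, Finset.sum_empty, cls_congr _ 1 _ (by group), cls_one, qq_one]
  | succ K ih =>
    have hword : (a * b) ^ (K+1) * (b ^ (K+1))⁻¹ * (a ^ (K+1))⁻¹
        = ((a * b) ^ K * (b ^ K)⁻¹ * (a ^ K)⁻¹)
          * (a ^ K * (b ^ K * a * (b ^ K)⁻¹ * a⁻¹) * (a ^ K)⁻¹) := by
      rw [pow_succ (a * b), pow_succ b, pow_succ a, mul_inv_rev, mul_inv_rev]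
      group
    rw [cls_congr _ _ _ hword,
      cls_mul _ _ (memE K) (conj_mem n (a ^ K) _ (memcomm (b ^ K) a)),
      qq_mul, ih, lemFq (a ^ K) K, Finset.sum_range_succ]
    congr 1

theorem rel4 : ∑ k ∈ Finset.range n, ∑ l ∈ Finset.range k, yqv n k l = 0 := by
  have h := lemEq (n := n) n
  have hsplit : cls n ((a * b) ^ n * (b ^ n)⁻¹ * (a ^ n)⁻¹) (memE n)
      = cls n ((a * b) ^ n) (pow_n_mem n (a * b))
        * cls n (b ^ n)⁻¹ (inv_mem (pow_n_mem n b))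
        * cls n (a ^ n)⁻¹ (inv_mem (pow_n_mem n a)) := by
    rw [← cls_mul _ _ (pow_n_mem n (a * b)) (inv_mem (pow_n_mem n b)),
      ← cls_mul _ _ (mul_mem (pow_n_mem n (a * b)) (inv_mem (pow_n_mem n b)))
        (inv_mem (pow_n_mem n a))]
  rw [hsplit, qq_mul, qq_mul] at h
  have h1 : qq n (cls n ((a * b) ^ n) (pow_n_mem n (a * b))) = 0 := by
    rw [cls_eq_conjCl_one]
    exact gamC' hn 1
  have h2 : qq n (cls n (b ^ n)⁻¹ (inv_mem (pow_n_mem n b))) = 0 := by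
    rw [cls_inv _ (pow_n_mem n b), qq_inv, cls_eq_conjCl_one]
    rw [gamB' hn 1, neg_zero]
  have h3 : qq n (cls n (a ^ n)⁻¹ (inv_mem (pow_n_mem n a))) = 0 := by
    rw [cls_inv _ (pow_n_mem n a), qq_inv, cls_eq_conjCl_one]
    rw [gamA' hn 1, neg_zero]
  rw [h1, h2, h3, add_zero, add_zero] at h
  exact h.symm

theorem stepA (i j : ℕ) (hj : j < n - 2) : yqv n i j ∈ Vsp n := by
  rw [yq_mod, Nat.mod_eq_of_lt (show j < n by omega)]
  by_cases hi : i % n < n - 1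
  · exact base_mem hn _ _ hi hj
  · have hieq : i % n = n - 1 := by
      have := Nat.mod_lt i (show 0 < n by omega)
      omega
    rw [hieq]
    have hs := rel1 hn j
    rw [sum_split n (by omega)] at hs
    have hy : yqv n (n-1) j = -∑ i' ∈ Finset.range (n-1), yqv n i' j :=
      eq_neg_of_add_eq_zero_right hs
    rw [hy]
    exact neg_mem (Submodule.sum_mem _ fun i' hi' =>
      base_mem hn i' j (Finset.mem_range.mp hi') hj)

theorem stepB (i : ℕ) : yqv n i (n-2) + yqv n i (n-1) ∈ Vsp n := by
  have hs := rel2 hn i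
  rw [sum_split n (by omega), sum_split (n-1) (by omega),
    show n - 1 - 1 = n - 2 from by omega, add_assoc] at hs
  have hy : yqv n i (n-2) + yqv n i (n-1)
      = -∑ j' ∈ Finset.range (n-2), yqv n i j' := eq_neg_of_add_eq_zero_right hs
  rw [hy]
  exact neg_mem (Submodule.sum_mem _ fun j' hj' =>
    stepA hn i j' (Finset.mem_range.mp hj'))

theorem stepC (d : ℕ) : yqv n (d + (n-2)) (n-2) + yqv n (d + (n-1)) (n-1) ∈ Vsp n := by
  have hs := rel3 hn d
  rw [sum_split n (by omega), sum_split (n-1) (by omega),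
    show n - 1 - 1 = n - 2 from by omega, add_assoc] at hs
  have hy : yqv n (d + (n-2)) (n-2) + yqv n (d + (n-1)) (n-1)
      = -∑ k ∈ Finset.range (n-2), yqv n (d + k) k := eq_neg_of_add_eq_zero_right hs
  rw [hy]
  exact neg_mem (Submodule.sum_mem _ fun k hk =>
    stepA hn (d + k) k (Finset.mem_range.mp hk))

theorem stepD (i : ℕ) : yqv n i (n-2) - yqv n (i+1) (n-2) ∈ Vsp n := by
  have h1 := stepC hn (i + 2)
  rw [show i + 2 + (n-2) = i + n from by omega,
    show i + 2 + (n-1) = (i + 1) + n from by omega, yq_addn, yq_addn] at h1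
  have h2 := stepB hn (i + 1)
  have := sub_mem h1 h2
  have heq : (yqv n i (n-2) + yqv n (i+1) (n-1))
      - (yqv n (i+1) (n-2) + yqv n (i+1) (n-1))
      = yqv n i (n-2) - yqv n (i+1) (n-2) := by abel
  rwa [heq] at this

theorem stepE : yqv n (n-1) (n-2) ∈ Vsp n := by
  have hs := rel4 hn
  rw [sum_split n (by omega)] at hs
  nth_rewrite 2 [sum_split (n-1) (by omega)] at hs
  rw [show n - 1 - 1 = n - 2 from by omega, ← add_assoc] at hs
  have hy : yqv n (n-1) (n-2)
      = -((∑ k ∈ Finset.range (n-1), ∑ l ∈ Finset.range k, yqv n k l)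
          + ∑ l ∈ Finset.range (n-2), yqv n (n-1) l) := eq_neg_of_add_eq_zero_right hs
  rw [hy]
  refine neg_mem (add_mem (Submodule.sum_mem _ fun k hk => Submodule.sum_mem _ fun l hl => ?_)
    (Submodule.sum_mem _ fun l hl => stepA hn _ _ (Finset.mem_range.mp hl)))
  have hk' := Finset.mem_range.mp hk
  have hl' := Finset.mem_range.mp hl
  exact stepA hn k l (by omega)

theorem stepF (t : ℕ) : yqv n (n-1-t) (n-2) ∈ Vsp n := by
  induction t with
  | zero => exact stepE hn
  | succ t ih =>
    by_cases ht : t + 1 ≤ n - 1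
    · have hD := stepD hn (n-1-(t+1))
      rw [show n-1-(t+1)+1 = n-1-t from by omega] at hD
      have := add_mem hD ih
      rwa [sub_add_cancel] at this
    · rw [show n-1-(t+1) = n-1-t from by omega]
      exact ih

theorem stepG (i : ℕ) : yqv n i (n-2) ∈ Vsp n := by
  rw [yq_mod, Nat.mod_eq_of_lt (show n-2 < n by omega)]
  have h := stepF hn (n-1-(i % n))
  rwa [show n-1-(n-1-(i % n)) = i % n from by
    have := Nat.mod_lt i (show 0 < n by omega); omega] at h

theorem stepH (i : ℕ) : yqv n i (n-1) ∈ Vsp n := by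
  have h1 := stepB hn i
  have h2 := stepG hn i
  have := sub_mem h1 h2
  rwa [add_sub_cancel_left] at this

theorem allY (i j : ℕ) : yqv n i j ∈ Vsp n := by
  rw [yq_mod]
  have hj := Nat.mod_lt j (show 0 < n by omega)
  rcases lt_trichotomy (j % n) (n-2) with h | h | h
  · exact stepA hn _ _ h
  · rw [h]; exact stepG hn _
  · rw [show j % n = n-1 from by omega]
    exact stepH hn _

end
end Part9
section Part10
variable {n : ℕ}

/-- `x ∈ R` all of whose `H₀`-conjugate classes lie in the span. -/
def Good (n : ℕ) (x : F2) : Prop :=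
  ∃ hx : x ∈ R n, ∀ g : F2, qq n (conjCl n g x hx) ∈ Vsp n

theorem good_one : Good n 1 :=
  ⟨one_mem _, fun g => by rw [conjCl_one_right, qq_one]; exact zero_mem _⟩

theorem good_mul {x y : F2} (hx : Good n x) (hy : Good n y) : Good n (x * y) := by
  obtain ⟨hx1, hx2⟩ := hx
  obtain ⟨hy1, hy2⟩ := hy
  exact ⟨mul_mem hx1 hy1, fun g => by
    rw [conjCl_mul g x y hx1 hy1, qq_mul]
    exact add_mem (hx2 g) (hy2 g)⟩

theorem good_inv {x : F2} (hx : Good n x) : Good n x⁻¹ := by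
  obtain ⟨hx1, hx2⟩ := hx
  exact ⟨inv_mem hx1, fun g => by
    rw [conjCl_inv g x hx1, qq_inv]
    exact neg_mem (hx2 g)⟩

theorem good_conj {x : F2} (h : F2) (hx : Good n x) : Good n (h * x * h⁻¹) := by
  obtain ⟨hx1, hx2⟩ := hx
  exact ⟨conj_mem n h x hx1, fun g => by
    rw [← conjCl_comp g h x hx1]
    exact hx2 (g * h)⟩

section
variable (hn : 2 ≤ n)
include hn

theorem good_an : Good n (a ^ n) :=
  ⟨pow_n_mem n a, fun g => by rw [gamA' hn g]; exact zero_mem _⟩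

theorem good_bn : Good n (b ^ n) :=
  ⟨pow_n_mem n b, fun g => by rw [gamB' hn g]; exact zero_mem _⟩

theorem good_abn : Good n ((a * b) ^ n) :=
  ⟨pow_n_mem n (a * b), fun g => by rw [gamC' hn g]; exact zero_mem _⟩

theorem good_c : Good n ⁅b, a⁆ := by
  refine ⟨commutator_mem n b a, fun g => ?_⟩
  obtain ⟨i, j, hi, hj, hphi⟩ := phi_decomp' hn g
  rw [conjCl_congr _ _ _ _ hphi]
  exact allY hn i j

theorem good_Fw (j : ℕ) : Good n (b ^ j * a * (b ^ j)⁻¹ * a⁻¹) := by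
  induction j with
  | zero =>
    rw [show (b ^ 0 * a * (b ^ 0)⁻¹ * a⁻¹ : F2) = 1 from by group]
    exact good_one
  | succ j ih =>
    rw [show (b ^ (j+1) * a * (b ^ (j+1))⁻¹ * a⁻¹ : F2)
        = (b ^ j * ⁅b, a⁆ * (b ^ j)⁻¹) * (b ^ j * a * (b ^ j)⁻¹ * a⁻¹) from by
      have hc : (⁅b, a⁆ : F2) = b * a * b⁻¹ * a⁻¹ := rfl
      rw [hc, pow_succ b, mul_inv_rev]
      group]
    exact good_mul (good_conj (b ^ j) (good_c hn)) ih

theorem good_z (i j : ℕ) : Good n (b ^ j * a ^ i * (b ^ j)⁻¹ * (a ^ i)⁻¹) := by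
  induction i with
  | zero =>
    rw [show (b ^ j * a ^ 0 * (b ^ j)⁻¹ * (a ^ 0)⁻¹ : F2) = 1 from by group]
    exact good_one
  | succ i ih =>
    rw [show (b ^ j * a ^ (i+1) * (b ^ j)⁻¹ * (a ^ (i+1))⁻¹ : F2)
        = (b ^ j * a ^ i * (b ^ j)⁻¹ * (a ^ i)⁻¹)
          * (a ^ i * (b ^ j * a * (b ^ j)⁻¹ * a⁻¹) * (a ^ i)⁻¹) from by
      rw [pow_succ a, mul_inv_rev]
      group]
    exact good_mul ih (good_conj (a ^ i) (good_Fw hn j))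

theorem claimC (w : F2) : ∃ (x : F2) (i j : ℕ), Good n x ∧ w = x * a ^ i * b ^ j := by
  induction w using FreeGroup.induction_on with
  | C1 => exact ⟨1, 0, 0, good_one, by group⟩
  | of t =>
    fin_cases t
    · exact ⟨1, 1, 0, good_one, by show a = _; group⟩
    · exact ⟨1, 0, 1, good_one, by show b = _; group⟩
  | inv_of t _ =>
    fin_cases t
    · refine ⟨(a ^ n)⁻¹, n - 1, 0, good_inv (good_an hn), ?_⟩
      show a⁻¹ = _
      have hsp : (a : F2) ^ n = a ^ (n-1) * a := by
        rw [← pow_succ, show n - 1 + 1 = n from by omega]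
      rw [hsp]
      group
    · refine ⟨(b ^ n)⁻¹, 0, n - 1, good_inv (good_bn hn), ?_⟩
      show b⁻¹ = _
      have hsp : (b : F2) ^ n = b ^ (n-1) * b := by
        rw [← pow_succ, show n - 1 + 1 = n from by omega]
      rw [hsp]
      group
  | mul u v hu hv =>
    obtain ⟨x, i, j, hx, rfl⟩ := hu
    obtain ⟨y, i', j', hy, rfl⟩ := hv
    refine ⟨x * ((a ^ i * b ^ j) * y * (a ^ i * b ^ j)⁻¹)
      * (a ^ i * (b ^ j * a ^ i' * (b ^ j)⁻¹ * (a ^ i')⁻¹) * (a ^ i)⁻¹),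
      i + i', j + j',
      good_mul (good_mul hx (good_conj _ hy)) (good_conj _ (good_z hn i' j)), ?_⟩
    rw [pow_add, pow_add]
    group

omit hn in
theorem cls_pow (u : F2) (hu : u ∈ R n) (s : ℕ) :
    cls n (u ^ s) (pow_mem hu s) = (cls n u hu) ^ s := by
  unfold cls
  rw [← map_pow]
  rfl

omit hn in
theorem qq_pow (z : Ab n) (s : ℕ) : qq n (z ^ s) = s • qq n z := by
  unfold qq
  rw [map_pow]
  rfl

theorem qq_cls_an : qq n (cls n (a ^ n) (pow_n_mem n a)) = 0 := by
  rw [cls_eq_conjCl_one]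
  exact gamA' hn 1

theorem qq_cls_bn : qq n (cls n (b ^ n) (pow_n_mem n b)) = 0 := by
  rw [cls_eq_conjCl_one]
  exact gamB' hn 1

theorem span_all (z : Additive (Ab n ⧸ Gam n)) : z ∈ Vsp n := by
  haveI : NeZero n := ⟨by omega⟩
  obtain ⟨w, hw⟩ := QuotientGroup.mk'_surjective (Gam n) (Additive.toMul z)
  have hz : z = qq n w := by
    unfold qq
    rw [hw]
    rfl
  rw [hz]
  clear hz hw z
  obtain ⟨r, rfl⟩ : ∃ r : R n, Abelianization.of r = w := by
    exact QuotientGroup.induction_on w fun r => ⟨r, rfl⟩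
  obtain ⟨x, hx⟩ := r
  obtain ⟨x₀, i, j, ⟨hx₀, hgood⟩, rfl⟩ := claimC hn x
  have hab : a ^ i * b ^ j ∈ R n := by
    have h1 : a ^ i * b ^ j = x₀⁻¹ * (x₀ * a ^ i * b ^ j) := by group
    rw [h1]
    exact mul_mem (inv_mem hx₀) hx
  -- exponents are divisible by n
  have hdvd : n ∣ i ∧ n ∣ j := by
    have h2 : phi n (a ^ i * b ^ j) = 1 := hab
    rw [map_mul, map_pow, map_pow, phi_a, phi_b] at h2
    have h3 : Multiplicative.toAdd (al n ^ i * be n ^ j) = (0, 0) := by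
      rw [h2]; rfl
    rw [toAdd_mul, toAdd_pow, toAdd_pow] at h3
    have h4 : (i • Multiplicative.toAdd (al n)).1 + (j • Multiplicative.toAdd (be n)).1
        = 0 := congrArg Prod.fst h3
    have h5 : (i • Multiplicative.toAdd (al n)).2 + (j • Multiplicative.toAdd (be n)).2
        = 0 := congrArg Prod.snd h3
    simp only [al, be, toAdd_ofAdd, Prod.smul_mk, smul_zero, smul_eq_mul, mul_one,
      nsmul_eq_mul, add_zero, zero_add] at h4 h5
    constructor
    · exact (ZMod.natCast_eq_zero_iff i n).mp h4
    · exact (ZMod.natCast_eq_zero_iff j n).mp h5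
  obtain ⟨⟨s, rfl⟩, ⟨t, rfl⟩⟩ := hdvd
  show qq n (cls n (x₀ * a ^ (n*s) * b ^ (n*t)) hx) ∈ Vsp n
  have han : (a : F2) ^ (n*s) ∈ R n := by
    rw [pow_mul]
    exact pow_mem (pow_n_mem n a) s
  have hbn : (b : F2) ^ (n*t) ∈ R n := by
    rw [pow_mul]
    exact pow_mem (pow_n_mem n b) t
  rw [cls_mul _ _ (mul_mem hx₀ han) hbn, cls_mul _ _ hx₀ han, qq_mul, qq_mul]
  have h6 : qq n (cls n (a ^ (n*s)) han) = 0 := by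
    rw [cls_congr _ ((a ^ n) ^ s) _ (pow_mul a n s), cls_pow _ (pow_n_mem n a), qq_pow, qq_cls_an hn, smul_zero]
  have h7 : qq n (cls n (b ^ (n*t)) hbn) = 0 := by
    rw [cls_congr _ ((b ^ n) ^ t) _ (pow_mul b n t), cls_pow _ (pow_n_mem n b), qq_pow, qq_cls_bn hn, smul_zero]
  rw [h6, h7, add_zero, add_zero]
  have hg := hgood 1
  rwa [← cls_eq_conjCl_one] at hg

end
end Part10


/-- the `(n-1)(n-2)` classes `(αⁱβʲ)·[[b,a]] mod Γ`, for `0 ≤ i ≤ n-2`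
and `0 ≤ j ≤ n-3`, form a `ℤ`-basis of `R^{ab}/Γ` (the first homology of the closed
Fermat curve of exponent `n`). -/
theorem statement7 (n : ℕ) (hn : 2 ≤ n) :
    ∃ B : Module.Basis (Fin (n - 1) × Fin (n - 2)) ℤ (Additive (Ab n ⧸ Gam n)),
      ∀ p : Fin (n - 1) × Fin (n - 2), B p =
        Additive.ofMul (QuotientGroup.mk
          (conjCl n (a ^ (p.1 : ℕ) * b ^ (p.2 : ℕ)) ⁅b, a⁆ (commutator_mem n b a))) := by
  have hli := vB_linearIndependent hn
  have hspan : ⊤ ≤ Submodule.span ℤ (Set.range (vB n)) := fun z _ => span_all hn z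
  refine ⟨Module.Basis.mk hli hspan, fun p => ?_⟩
  rw [Module.Basis.mk_apply]
  rfl

end Fermat
end

section
/- The abelianization R^{ab} = R_{k,s−1}/R_{k,s−1}' is generated as a ℤ-module by the classes of the following elements, taken over all multi-indices 𝐢 = (i₁,…,i_{s−1}) with 0 ≤ i_j ≤ k−1: (x_{s−1}^k)^(x_{1,s−2}^𝐢); (x_ν^k)^(x_{1,ν−1}^𝐢 · x_{ν+1,s−1}^𝐢) for 1 ≤ ν ≤ s−2; and [x_j, x_ν]^(x_{1,s−1}^𝐢) for 1 ≤ ν < j ≤ s−1. -/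
namespace GenFermat

open scoped commutatorElement

/-- The free group `F_{s-1}` on `s-1` generators `x₁, …, x_{s-1}`
(indexed in Lean by `Fin (s-1)`, so that the mathematical generator `x_m` is
`FreeGroup.of ⟨m-1, _⟩`). -/
abbrev FG (s : ℕ) : Type := FreeGroup (Fin (s - 1))

/-- The generator `x_{t+1}` (Lean index `t : ℕ`, `t < s-1`); junk value `1` otherwise. -/
def x (s : ℕ) (t : ℕ) : FG s := if h : t < s - 1 then FreeGroup.of ⟨t, h⟩ else 1

/-- The group `(ℤ/kℤ)^{s-1}`, written multiplicatively. -/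
abbrev HG (s k : ℕ) : Type := Multiplicative (Fin (s - 1) → ZMod k)

/-- The homomorphism `φ : F_{s-1} → (ℤ/kℤ)^{s-1}` sending `x_j` to the `j`-th standard
generator. -/
def phi (s k : ℕ) : FG s →* HG s k :=
  FreeGroup.lift fun j => Multiplicative.ofAdd (Pi.single j 1)

/-- `R_{k,s-1} = ker φ`, the fundamental group of the open generalized Fermat curve of
type `(k, s-1)`. -/
abbrev R (s k : ℕ) : Subgroup (FG s) := (phi s k).ker

theorem pow_k_mem (s k : ℕ) (g : FG s) : g ^ k ∈ R s k := by
  rw [MonoidHom.mem_ker, map_pow]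
  have h : k • Multiplicative.toAdd (phi s k g) = 0 := by
    funext t
    simp [ZMod.natCast_self]
  calc (phi s k g) ^ k
      = Multiplicative.ofAdd (k • Multiplicative.toAdd (phi s k g)) := by
        rw [ofAdd_nsmul, ofAdd_toAdd]
    _ = 1 := by rw [h]; rfl

theorem commutator_mem (s k : ℕ) (g h : FG s) : ⁅g, h⁆ ∈ R s k := by
  rw [MonoidHom.mem_ker, map_commutatorElement, commutatorElement_eq_one_iff_commute]
  exact Commute.all _ _

theorem conj_mem (s k : ℕ) (g w : FG s) (hw : w ∈ R s k) : g * w * g⁻¹ ∈ R s k :=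
  Subgroup.Normal.conj_mem inferInstance w hw g

/-- The ordered product `x_{lo+1}^{e(lo)} x_{lo+2}^{e(lo+1)} ⋯ x_{hi}^{e(hi-1)}`
(Lean indices in `[lo, hi)`); for a multi-index `𝐢` this realizes the element
`x_{ℓ₁,ℓ₂}^𝐢 = x_{ℓ₁}^{i_{ℓ₁}} ⋯ x_{ℓ₂}^{i_{ℓ₂}}` with `lo = ℓ₁ - 1`, `hi = ℓ₂`
(and equals `1` when `ℓ₁ > ℓ₂`). -/
def segN (s : ℕ) (e : ℕ → ℕ) (lo hi : ℕ) : FG s :=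
  ((List.range' lo (hi - lo)).map fun t => x s t ^ e t).prod

/-- The exponent function of a multi-index `𝐢 : Fin (s-1) → Fin k`. -/
def eI (s k : ℕ) (I : Fin (s - 1) → Fin k) : ℕ → ℕ :=
  fun t => if h : t < s - 1 then (I ⟨t, h⟩ : ℕ) else 0

/-- The abelianization `R^{ab} = R_{k,s-1}/R_{k,s-1}'`. -/
abbrev Ab (s k : ℕ) : Type := Abelianization ↥(R s k)

/-- The class `[w] ∈ R^{ab}` of an element `w ∈ R_{k,s-1}`. -/
def cls (s k : ℕ) (w : FG s) (hw : w ∈ R s k) : Ab s k := Abelianization.of ⟨w, hw⟩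

/-- The class `[g w g⁻¹] ∈ R^{ab}`; for `h = φ(g) ∈ H` this is the value `h·[w]` of the
conjugation action of `H = (ℤ/kℤ)^{s-1}` on `R^{ab}`. -/
def conjCl (s k : ℕ) (g w : FG s) (hw : w ∈ R s k) : Ab s k :=
  cls s k (g * w * g⁻¹) (conj_mem s k g w hw)

/-- The inclusion `Fin (s-2) → Fin (s-1)`. -/
def cast2 (s : ℕ) : Fin (s - 2) → Fin (s - 1) :=
  Fin.castLE (Nat.sub_le_sub_left one_le_two s)


section Aux

variable (s k : ℕ)

lemma cls_congr {w w' : FG s} (hw : w ∈ R s k) (hw' : w' ∈ R s k) (h : w = w') :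
    cls s k w hw = cls s k w' hw' := by subst h; rfl

lemma cls_mul {w1 w2 : FG s} (h1 : w1 ∈ R s k) (h2 : w2 ∈ R s k) (h12 : w1 * w2 ∈ R s k) :
    cls s k (w1 * w2) h12 = cls s k w1 h1 * cls s k w2 h2 := by
  unfold cls
  rw [← map_mul]
  rfl

lemma cls_inv {w : FG s} (hw : w ∈ R s k) (hw' : w⁻¹ ∈ R s k) :
    cls s k w⁻¹ hw' = (cls s k w hw)⁻¹ := by
  unfold cls
  rw [← map_inv]
  rfl

lemma conjCl_congr_w (g : FG s) {w w' : FG s} (hw : w ∈ R s k) (hw' : w' ∈ R s k)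
    (h : w = w') : conjCl s k g w hw = conjCl s k g w' hw' := by subst h; rfl

lemma conjCl_mul_right (g h : FG s) {w : FG s} (hw : w ∈ R s k) :
    conjCl s k (g * h) w hw
      = conjCl s k g (h * w * h⁻¹) (conj_mem s k h w hw) := by
  unfold conjCl
  exact cls_congr s k _ _ (by group)

lemma conjCl_inv (g : FG s) {w : FG s} (hw : w ∈ R s k) (hw' : w⁻¹ ∈ R s k) :
    conjCl s k g w⁻¹ hw' = (conjCl s k g w hw)⁻¹ := by
  unfold conjCl
  rw [← cls_inv s k (conj_mem s k g w hw) (inv_mem (conj_mem s k g w hw))]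
  exact cls_congr s k _ _ (by group)

lemma conjCl_one (g : FG s) (h1 : (1 : FG s) ∈ R s k) :
    conjCl s k g 1 h1 = 1 := by
  unfold conjCl
  have : cls s k (g * 1 * g⁻¹) (conj_mem s k g 1 h1) = cls s k 1 (one_mem _) :=
    cls_congr s k _ _ (by group)
  rw [this]
  unfold cls
  have : (⟨1, one_mem _⟩ : ↥(R s k)) = 1 := rfl
  rw [this, map_one]

lemma conjCl_phi_congr {g g' : FG s} {w : FG s} (hw : w ∈ R s k)
    (h : phi s k g = phi s k g') : conjCl s k g w hw = conjCl s k g' w hw := by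
  have hr : g⁻¹ * g' ∈ R s k := by
    rw [MonoidHom.mem_ker, map_mul, map_inv, h, inv_mul_cancel]
  set r := g⁻¹ * g' with hrdef
  have hg' : g' = g * r := by rw [hrdef]; group
  rw [hg', conjCl_mul_right]
  unfold conjCl
  have e1 : g * (r * w * r⁻¹) * g⁻¹ = (g * r * g⁻¹) * (g * w * g⁻¹) * (g * r * g⁻¹)⁻¹ := by
    group
  have m1 := conj_mem s k g r hr
  have m2 := conj_mem s k g w hw
  rw [cls_congr s k _ (mul_mem (mul_mem m1 m2) (inv_mem m1)) e1,
    cls_mul s k (mul_mem m1 m2) (inv_mem m1),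
    cls_mul s k m1 m2, cls_inv s k m1 (inv_mem m1)]
  exact (mul_inv_cancel_comm (cls s k (g * r * g⁻¹) m1) (cls s k (g * w * g⁻¹) m2)).symm

end Aux

section Phi

variable (s k : ℕ)

lemma segN_split (e : ℕ → ℕ) {lo mid hi : ℕ} (h1 : lo ≤ mid) (h2 : mid ≤ hi) :
    segN s e lo hi = segN s e lo mid * segN s e mid hi := by
  unfold segN
  rw [← List.prod_append, ← List.map_append]
  have h := List.range'_append (s := lo) (m := mid - lo) (n := hi - mid) (step := 1)
  rw [one_mul, show lo + (mid - lo) = mid by omega] at h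
  rw [show hi - lo = (mid - lo) + (hi - mid) by omega, ← h]

lemma segN_single (e : ℕ → ℕ) (t : ℕ) : segN s e t (t + 1) = x s t ^ e t := by
  unfold segN
  simp

lemma phi_x_pow (c : ℕ) {t : ℕ} (ht : t < s - 1) :
    phi s k (x s t ^ c) = Multiplicative.ofAdd (Pi.single (⟨t, ht⟩ : Fin (s-1)) (c : ZMod k)) := by
  have hx : x s t = FreeGroup.of (⟨t, ht⟩ : Fin (s-1)) := by unfold x; rw [dif_pos ht]
  rw [map_pow, hx]
  have : phi s k (FreeGroup.of (⟨t, ht⟩ : Fin (s-1)))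
      = Multiplicative.ofAdd (Pi.single (⟨t, ht⟩ : Fin (s-1)) (1 : ZMod k)) := by
    unfold phi; rw [FreeGroup.lift_apply_of]
  rw [this, ← ofAdd_nsmul]
  congr 1
  funext j
  by_cases hj : j = (⟨t, ht⟩ : Fin (s-1))
  · subst hj; simp [nsmul_eq_mul]
  · simp [Pi.single_apply, hj]

lemma toAdd_phi_segN (e : ℕ → ℕ) :
    ∀ (n lo : ℕ), lo + n ≤ s - 1 → ∀ j : Fin (s - 1),
      Multiplicative.toAdd (phi s k (segN s e lo (lo + n))) j
        = if lo ≤ (j : ℕ) ∧ (j : ℕ) < lo + n then ((e (j : ℕ) : ℕ) : ZMod k) else 0 := by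
  intro n
  induction n with
  | zero =>
    intro lo _ j
    have h0 : segN s e lo (lo + 0) = 1 := by unfold segN; simp
    rw [h0, map_one]
    have : (Multiplicative.toAdd (1 : HG s k)) j = 0 := rfl
    rw [this, if_neg (by omega)]
  | succ n ih =>
    intro lo hle j
    have hlo : lo < s - 1 := by omega
    have hdec : segN s e lo (lo + (n + 1)) = x s lo ^ e lo * segN s e (lo + 1) ((lo + 1) + n) := by
      unfold segN
      rw [show lo + (n + 1) - lo = n + 1 by omega, show (lo + 1) + n - (lo + 1) = n by omega,
        List.range'_succ, List.map_cons, List.prod_cons]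
    rw [hdec, map_mul]
    have haddm : Multiplicative.toAdd (phi s k (x s lo ^ e lo) * phi s k (segN s e (lo+1) ((lo+1)+n))) j
        = Multiplicative.toAdd (phi s k (x s lo ^ e lo)) j
          + Multiplicative.toAdd (phi s k (segN s e (lo+1) ((lo+1)+n))) j := rfl
    rw [haddm, phi_x_pow s k (e lo) hlo, ih (lo + 1) (by omega) j]
    have hsingle : Multiplicative.toAdd
        (Multiplicative.ofAdd (Pi.single (⟨lo, hlo⟩ : Fin (s-1)) ((e lo : ℕ) : ZMod k)
          : Fin (s-1) → ZMod k)) j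
        = (Pi.single (⟨lo, hlo⟩ : Fin (s-1)) ((e lo : ℕ) : ZMod k) : Fin (s-1) → ZMod k) j := by rw [toAdd_ofAdd]
    rw [hsingle, Pi.single_apply]
    by_cases hj : (j : ℕ) = lo
    · have hjeq : j = (⟨lo, hlo⟩ : Fin (s-1)) := Fin.ext hj
      rw [if_pos hjeq, if_neg (by omega), if_pos (by omega), add_zero, hj]
    · have hjne : j ≠ (⟨lo, hlo⟩ : Fin (s-1)) := fun h => hj (by rw [h])
      rw [if_neg hjne, zero_add]
      by_cases hcond : lo + 1 ≤ (j : ℕ) ∧ (j : ℕ) < (lo + 1) + n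
      · rw [if_pos hcond, if_pos (by omega)]
      · rw [if_neg hcond, if_neg (by omega)]

lemma toAdd_phi_segN_full (e : ℕ → ℕ) (j : Fin (s - 1)) :
    Multiplicative.toAdd (phi s k (segN s e 0 (s - 1))) j = ((e (j : ℕ) : ℕ) : ZMod k) := by
  have := toAdd_phi_segN s k e (s - 1) 0 (by omega) j
  rw [zero_add] at this
  rw [this, if_pos ⟨Nat.zero_le _, j.isLt⟩]

lemma exists_I (hk : 2 ≤ k) (g : FG s) :
    ∃ I : Fin (s - 1) → Fin k, phi s k (segN s (eI s k I) 0 (s - 1)) = phi s k g := by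
  haveI : NeZero k := ⟨by omega⟩
  refine ⟨fun j => ⟨(Multiplicative.toAdd (phi s k g) j).val, ZMod.val_lt _⟩, ?_⟩
  apply Multiplicative.toAdd.injective
  funext j
  rw [show Multiplicative.toAdd (phi s k g) j
      = ((Multiplicative.toAdd (phi s k g) j).val : ZMod k) from
      (ZMod.natCast_rightInverse _).symm]
  rw [toAdd_phi_segN_full]
  congr 1
  unfold eI
  rw [dif_pos j.isLt, Fin.eta]

end Phi

/-- The basic relators. -/
def base (s k : ℕ) : Set (FG s) :=
  {w | (∃ ν : Fin (s - 1), w = x s (ν : ℕ) ^ k) ∨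
    ∃ i j : Fin (s - 1), w = ⁅x s (i : ℕ), x s (j : ℕ)⁆}

lemma base_subset_R (s k : ℕ) : base s k ⊆ (R s k : Set (FG s)) := by
  rintro w (⟨ν, rfl⟩ | ⟨i, j, rfl⟩)
  · exact pow_k_mem s k _
  · exact commutator_mem s k _ _

lemma x_eq_of (s : ℕ) (j : Fin (s - 1)) : x s (j : ℕ) = FreeGroup.of j := by
  unfold x; rw [dif_pos j.isLt, Fin.eta]

lemma R_le_normalClosure (s k : ℕ) (hk : 2 ≤ k) :
    R s k ≤ Subgroup.normalClosure (base s k) := by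
  haveI : NeZero k := ⟨by omega⟩
  haveI : Fact (1 < k) := ⟨by omega⟩
  set N := Subgroup.normalClosure (base s k) with hN
  haveI : N.Normal := Subgroup.normalClosure_normal
  set a : ℕ → FG s ⧸ N := fun t => ((x s t : FG s) : FG s ⧸ N) with ha
  have ha_pow : ∀ t, a t ^ k = 1 := by
    intro t
    by_cases ht : t < s - 1
    · have : x s t ^ k ∈ N := Subgroup.subset_normalClosure (Or.inl ⟨⟨t, ht⟩, rfl⟩)
      rw [ha]
      rw [← QuotientGroup.mk_pow, QuotientGroup.eq_one_iff]
      exact this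
    · have hx1 : x s t = 1 := by unfold x; rw [dif_neg ht]
      rw [ha]; simp [hx1]
  have ha_comm : ∀ t u, Commute (a t) (a u) := by
    intro t u
    by_cases ht : t < s - 1
    · by_cases hu : u < s - 1
      · have : ⁅x s t, x s u⁆ ∈ N :=
          Subgroup.subset_normalClosure (Or.inr ⟨⟨t, ht⟩, ⟨u, hu⟩, rfl⟩)
        have h1 : ((⁅x s t, x s u⁆ : FG s) : FG s ⧸ N) = 1 := (QuotientGroup.eq_one_iff _).2 this
        have h2 : ⁅(a t), (a u)⁆ = 1 := by
          rw [ha]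
          simp only [commutatorElement_def] at h1 ⊢
          rw [← QuotientGroup.mk_inv, ← QuotientGroup.mk_inv, ← QuotientGroup.mk_mul,
            ← QuotientGroup.mk_mul, ← QuotientGroup.mk_mul]
          exact h1
        exact commutatorElement_eq_one_iff_commute.mp h2
      · have hx1 : x s u = 1 := by unfold x; rw [dif_neg hu]
        rw [ha]; simp [hx1]
    · have hx1 : x s t = 1 := by unfold x; rw [dif_neg ht]
      rw [ha]; simp [hx1]
  set Ew : FG s → ℕ → ℕ := fun w t =>
    if h : t < s - 1 then (Multiplicative.toAdd (phi s k w) ⟨t, h⟩).val else 0 with hEw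
  set P : (ℕ → ℕ) → FG s ⧸ N := fun e => ((List.range' 0 (s-1)).map fun t => a t ^ e t).prod
    with hP
  have hP_mul : ∀ e1 e2 : ℕ → ℕ, P e1 * P e2 = P (fun t => e1 t + e2 t) := by
    intro e1 e2
    rw [hP]
    simp only []
    induction (List.range' 0 (s-1)) with
    | nil => simp
    | cons t l ih =>
      simp only [List.map_cons, List.prod_cons]
      have hc : Commute (a t ^ e2 t) ((l.map fun u => a u ^ e1 u).prod) := by
        apply Commute.list_prod_right
        intro y hy
        obtain ⟨u, _, rfl⟩ := List.mem_map.mp hy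
        exact ((ha_comm t u).pow_pow _ _)
      calc (a t ^ e1 t * (l.map fun u => a u ^ e1 u).prod)
            * (a t ^ e2 t * (l.map fun u => a u ^ e2 u).prod)
          = a t ^ e1 t * (((l.map fun u => a u ^ e1 u).prod * a t ^ e2 t)
              * (l.map fun u => a u ^ e2 u).prod) := by
            rw [mul_assoc, mul_assoc]
        _ = a t ^ e1 t * ((a t ^ e2 t * (l.map fun u => a u ^ e1 u).prod)
              * (l.map fun u => a u ^ e2 u).prod) := by rw [hc.eq]
        _ = a t ^ (e1 t + e2 t) * ((l.map fun u => a u ^ e1 u).prod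
              * (l.map fun u => a u ^ e2 u).prod) := by
            rw [pow_add]; group
        _ = a t ^ (e1 t + e2 t) * (l.map fun u => a u ^ (e1 u + e2 u)).prod := by rw [ih]
  have hP_congr : ∀ e1 e2 : ℕ → ℕ, (∀ t, t < s - 1 → a t ^ e1 t = a t ^ e2 t) →
      P e1 = P e2 := by
    intro e1 e2 h
    rw [hP]
    simp only []
    congr 1
    apply List.map_congr_left
    intro t ht
    exact h t (by have := List.mem_range'_1.mp ht; omega)
  have hP_single : ∀ (j c : ℕ), j < s - 1 → P (fun t => if t = j then c else 0) = a j ^ c := by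
    intro j c hj
    rw [hP]
    simp only []
    have key : ∀ (n lo : ℕ), lo ≤ j → j < lo + n →
        ((List.range' lo n).map fun t => a t ^ (if t = j then c else 0)).prod = a j ^ c := by
      intro n
      induction n with
      | zero => intro lo h1 h2; omega
      | succ n ih =>
        intro lo h1 h2
        rw [List.range'_succ, List.map_cons, List.prod_cons]
        by_cases hlj : lo = j
        · subst hlj
          rw [if_pos rfl]
          have hrest : ((List.range' (lo+1) n).map fun t => a t ^ (if t = lo then c else 0)).prod
              = 1 := by
            apply List.prod_eq_one
            intro y hy
            obtain ⟨u, hu, rfl⟩ := List.mem_map.mp hy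
            have := List.mem_range'_1.mp hu
            rw [if_neg (by omega)]
            exact pow_zero _
          rw [hrest, mul_one]
        · rw [if_neg hlj, pow_zero, one_mul]
          exact ih (lo + 1) (by omega) (by omega)
    exact key (s-1) 0 (by omega) (by omega)
  have hmain : ∀ w : FG s, (w : FG s ⧸ N) = P (Ew w) := by
    intro w
    induction w using FreeGroup.induction_on with
    | C1 =>
      have h0 : ∀ t, Ew 1 t = 0 := by
        intro t
        rw [hEw]
        simp only []
        split
        · rw [map_one]
          exact ZMod.val_zero
        · rfl
      have : P (Ew 1) = P (fun _ => 0) := by congr 1; funext t; exact h0 t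
      rw [this, hP]
      simp only []
      rw [QuotientGroup.mk_one]
      symm
      apply List.prod_eq_one
      intro y hy
      obtain ⟨u, _, rfl⟩ := List.mem_map.mp hy
      exact pow_zero _
    | of j =>
      show ((FreeGroup.of j : FG s) : FG s ⧸ N) = P (Ew (FreeGroup.of j))
      have hof : (FreeGroup.of j : FG s) = x s (j : ℕ) := (x_eq_of s j).symm
      have hphiof : phi s k (FreeGroup.of j)
          = Multiplicative.ofAdd (Pi.single j (1 : ZMod k)) := by
        unfold phi; rw [FreeGroup.lift_apply_of]
      have hE : ∀ t, Ew (FreeGroup.of j) t = if t = (j : ℕ) then 1 else 0 := by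
        intro t
        rw [hEw]
        simp only [hphiof, toAdd_ofAdd]
        by_cases ht : t < s - 1
        · rw [dif_pos ht, Pi.single_apply]
          by_cases htj : (⟨t, ht⟩ : Fin (s-1)) = j
          · rw [if_pos htj, if_pos (by rw [← htj]), ZMod.val_one]
          · rw [if_neg htj, if_neg (by
              intro h; exact htj (Fin.ext h)), ZMod.val_zero]
        · rw [dif_neg ht, if_neg (by have := j.isLt; omega)]
      have : P (Ew (FreeGroup.of j)) = P (fun t => if t = (j:ℕ) then 1 else 0) := by
        congr 1; funext t; exact hE t
      rw [this, hP_single _ 1 j.isLt, pow_one]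
      show ((FreeGroup.of j : FG s) : FG s ⧸ N) = ((x s (j:ℕ) : FG s) : FG s ⧸ N)
      rw [x_eq_of]
    | inv_of j _ =>
      show (((FreeGroup.of j : FG s)⁻¹ : FG s) : FG s ⧸ N) = P (Ew (FreeGroup.of j)⁻¹)
      have hphiof : phi s k (FreeGroup.of j)
          = Multiplicative.ofAdd (Pi.single j (1 : ZMod k)) := by
        unfold phi; rw [FreeGroup.lift_apply_of]
      set v := (-1 : ZMod k).val with hv
      have hE : ∀ t, Ew (FreeGroup.of j)⁻¹ t = if t = (j : ℕ) then v else 0 := by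
        intro t
        rw [hEw]
        simp only [map_inv, hphiof]
        by_cases ht : t < s - 1
        · rw [dif_pos ht]
          rw [toAdd_inv, toAdd_ofAdd, Pi.neg_apply, Pi.single_apply]
          by_cases htj : (⟨t, ht⟩ : Fin (s-1)) = j
          · rw [if_pos htj, if_pos (by rw [← htj])]
          · rw [if_neg htj, if_neg (by intro h; exact htj (Fin.ext h)), neg_zero, ZMod.val_zero]
        · rw [dif_neg ht, if_neg (by have := j.isLt; omega)]
      have hPE : P (Ew (FreeGroup.of j)⁻¹) = P (fun t => if t = (j:ℕ) then v else 0) := by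
        congr 1; funext t; exact hE t
      rw [hPE, hP_single _ v j.isLt]
      have hmod : (v + 1) % k = 0 := by
        rw [hv]
        have := ZMod.val_add (-1 : ZMod k) 1
        rw [neg_add_cancel, ZMod.val_zero, ZMod.val_one] at this
        omega
      have hone : a (j:ℕ) ^ (v + 1) = 1 := by
        rw [pow_eq_pow_mod (v+1) (ha_pow (j:ℕ)), hmod, pow_zero]
      have : a (j:ℕ) ^ v * a (j:ℕ) = 1 := by rw [← pow_succ]; exact hone
      rw [QuotientGroup.mk_inv, eq_inv_of_mul_eq_one_left this]
      congr 1
      show ((FreeGroup.of j : FG s) : FG s ⧸ N) = ((x s (j:ℕ) : FG s) : FG s ⧸ N)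
      rw [x_eq_of]
    | mul w1 w2 ih1 ih2 =>
      rw [QuotientGroup.mk_mul, ih1, ih2, hP_mul]
      apply hP_congr
      intro t ht
      rw [hEw]
      simp only [dif_pos ht, map_mul]
      have hadd : Multiplicative.toAdd (phi s k w1 * phi s k w2) ⟨t, ht⟩
          = Multiplicative.toAdd (phi s k w1) ⟨t, ht⟩
            + Multiplicative.toAdd (phi s k w2) ⟨t, ht⟩ := rfl
      rw [hadd, ZMod.val_add]
      exact pow_eq_pow_mod _ (ha_pow t)
  intro w hw
  have hw1 : phi s k w = 1 := hw
  rw [← QuotientGroup.eq_one_iff w, hmain w]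
  have h0 : ∀ t, Ew w t = 0 := by
    intro t
    rw [hEw]
    simp only []
    split
    · rw [hw1, toAdd_one]
      exact ZMod.val_zero
    · rfl
  have : P (Ew w) = P (fun _ => 0) := by congr 1; funext t; exact h0 t
  rw [this, hP]
  apply List.prod_eq_one
  intro y hy
  obtain ⟨u, _, rfl⟩ := List.mem_map.mp hy
  exact pow_zero _


/-- The generating set of statement 14. -/
def genSet (s k : ℕ) : Set (Ab s k) :=
  {z : Ab s k |
      (∃ I : Fin (s - 1) → Fin k,
        z = conjCl s k (segN s (eI s k I) 0 (s - 2)) ((x s (s - 2)) ^ k)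
            (pow_k_mem s k _)) ∨
      (∃ (ν : Fin (s - 2)) (I : Fin (s - 1) → Fin k),
        z = conjCl s k (segN s (eI s k I) 0 (ν : ℕ) * segN s (eI s k I) ((ν : ℕ) + 1) (s - 1))
            ((x s (ν : ℕ)) ^ k) (pow_k_mem s k _)) ∨
      (∃ (ν' t : Fin (s - 1)) (I : Fin (s - 1) → Fin k), (ν' : ℕ) < (t : ℕ) ∧
        z = conjCl s k (segN s (eI s k I) 0 (s - 1)) ⁅x s (t : ℕ), x s (ν' : ℕ)⁆
            (commutator_mem s k _ _))}

lemma pow_conj_pow (s : ℕ) (t e c : ℕ) :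
    x s t ^ e * x s t ^ c * (x s t ^ e)⁻¹ = x s t ^ c := by
  rw [pow_mul_comm, mul_inv_cancel_right]

lemma conj_base_mem_closure (s k : ℕ) (hs : 3 ≤ s) (hk : 2 ≤ k) (g b : FG s)
    (hb : b ∈ base s k) (hbR : b ∈ R s k) :
    conjCl s k g b hbR ∈ Subgroup.closure (genSet s k) := by
  obtain ⟨I, hphiI⟩ := exists_I s k hk g
  set e := eI s k I with he
  -- first, a claim handling commutators with second index smaller
  have claim : ∀ (i j : Fin (s - 1)), (j : ℕ) < (i : ℕ) → ∀ hm : ⁅x s (i:ℕ), x s (j:ℕ)⁆ ∈ R s k,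
      conjCl s k g ⁅x s (i:ℕ), x s (j:ℕ)⁆ hm ∈ Subgroup.closure (genSet s k) := by
    intro i j hlt hm
    rw [← conjCl_phi_congr s k hm hphiI]
    exact Subgroup.subset_closure (Or.inr (Or.inr ⟨j, i, I, hlt, rfl⟩))
  rcases hb with ⟨ν, rfl⟩ | ⟨i, j, rfl⟩
  · -- power case
    rw [← conjCl_phi_congr s k hbR hphiI]
    by_cases hν : (ν : ℕ) = s - 2
    · have hone : segN s e (s - 2) (s - 1) = x s (s - 2) ^ e (s - 2) := by
        unfold segN
        rw [show s - 1 - (s - 2) = 1 by omega]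
        simp
      have hsplit : segN s e 0 (s - 1) = segN s e 0 (s - 2) * x s (s - 2) ^ e (s - 2) := by
        rw [segN_split s e (show (0:ℕ) ≤ s - 2 by omega) (show s - 2 ≤ s - 1 by omega), hone]
      rw [conjCl_congr_w s k _ hbR (pow_k_mem s k _) (show x s (ν:ℕ) ^ k = x s (s-2) ^ k by rw [hν]),
        hsplit, conjCl_mul_right,
        conjCl_congr_w s k _ _ (pow_k_mem s k _) (pow_conj_pow s (s-2) (e (s-2)) k)]
      exact Subgroup.subset_closure (Or.inl ⟨I, rfl⟩)
    · have hν2 : (ν : ℕ) < s - 2 := by have := ν.isLt; omega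
      have hsplit : segN s e 0 (s - 1)
          = segN s e 0 (ν : ℕ) * x s (ν : ℕ) ^ e (ν : ℕ) * segN s e ((ν : ℕ) + 1) (s - 1) := by
        rw [segN_split s e (show (0:ℕ) ≤ (ν:ℕ) by omega) (show (ν:ℕ) ≤ s - 1 by omega),
          segN_split s e (show (ν:ℕ) ≤ (ν:ℕ) + 1 by omega) (show (ν:ℕ) + 1 ≤ s - 1 by omega),
          segN_single, ← mul_assoc]
      have hphi2 : phi s k (segN s e 0 (s - 1))
          = phi s k ((segN s e 0 (ν : ℕ) * segN s e ((ν : ℕ) + 1) (s - 1)) * x s (ν:ℕ) ^ e (ν:ℕ)) := by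
        rw [hsplit, map_mul, map_mul, map_mul, map_mul, mul_right_comm]
      rw [conjCl_phi_congr s k hbR hphi2, conjCl_mul_right,
        conjCl_congr_w s k _ _ (pow_k_mem s k _) (pow_conj_pow s (ν:ℕ) (e (ν:ℕ)) k)]
      exact Subgroup.subset_closure (Or.inr (Or.inl ⟨⟨(ν:ℕ), hν2⟩, I, rfl⟩))
  · -- commutator case
    rcases lt_trichotomy (j : ℕ) (i : ℕ) with hlt | heq | hgt
    · exact claim i j hlt hbR
    · have : (⁅x s (i:ℕ), x s (j:ℕ)⁆ : FG s) = 1 := by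
        rw [show (j:ℕ) = (i:ℕ) from heq]
        exact commutatorElement_self _
      rw [conjCl_congr_w s k g hbR (one_mem _) this, conjCl_one]
      exact one_mem _
    · have hco : (⁅x s (i:ℕ), x s (j:ℕ)⁆ : FG s) = ⁅x s (j:ℕ), x s (i:ℕ)⁆⁻¹ :=
        (commutatorElement_inv (x s (j:ℕ)) (x s (i:ℕ))).symm
      rw [conjCl_congr_w s k g hbR (inv_mem (commutator_mem s k _ _)) hco,
        conjCl_inv s k g (commutator_mem s k _ _)]
      exact inv_mem (claim j i hgt _)
/-- `R^{ab}` is generated as a `ℤ`-module (equivalently, as a group,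
since it is abelian) by the classes of `(x_{s-1}^k)^(x_{1,s-2}^𝐢)`,
`(x_ν^k)^(x_{1,ν-1}^𝐢 · x_{ν+1,s-1}^𝐢)` for `1 ≤ ν ≤ s-2`, and
`[x_j, x_ν]^(x_{1,s-1}^𝐢)` for `1 ≤ ν < j ≤ s-1`, over all multi-indices `𝐢`.
(Lean indices are shifted by one: `ν : Fin (s-2)` and `ν', t : Fin (s-1)` below are the
mathematical `ν+1`, `ν'+1`, `j = t+1`, and `x^y = y x y⁻¹`.) -/
theorem statement14 (s k : ℕ) (hs : 3 ≤ s) (hk : 2 ≤ k) :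
    Subgroup.closure {z : Ab s k |
      (∃ I : Fin (s - 1) → Fin k,
        z = conjCl s k (segN s (eI s k I) 0 (s - 2)) ((x s (s - 2)) ^ k)
            (pow_k_mem s k _)) ∨
      (∃ (ν : Fin (s - 2)) (I : Fin (s - 1) → Fin k),
        z = conjCl s k (segN s (eI s k I) 0 (ν : ℕ) * segN s (eI s k I) ((ν : ℕ) + 1) (s - 1))
            ((x s (ν : ℕ)) ^ k) (pow_k_mem s k _)) ∨
      (∃ (ν' t : Fin (s - 1)) (I : Fin (s - 1) → Fin k), (ν' : ℕ) < (t : ℕ) ∧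
        z = conjCl s k (segN s (eI s k I) 0 (s - 1)) ⁅x s (t : ℕ), x s (ν' : ℕ)⁆
            (commutator_mem s k _ _))} = ⊤ := by
  show Subgroup.closure (genSet s k) = ⊤
  rw [Subgroup.eq_top_iff']
  intro z
  obtain ⟨r, rfl⟩ := QuotientGroup.mk'_surjective _ z
  obtain ⟨w, hw⟩ := r
  have hwN : w ∈ Subgroup.normalClosure (base s k) := R_le_normalClosure s k hk hw
  set W : Subgroup (FG s) :=
    Subgroup.map (R s k).subtype
      (Subgroup.comap Abelianization.of (Subgroup.closure (genSet s k))) with hW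
  have hle : Subgroup.normalClosure (base s k) ≤ W := by
    show Subgroup.closure (Group.conjugatesOfSet (base s k)) ≤ W
    rw [Subgroup.closure_le]
    rintro c hc
    rw [Group.mem_conjugatesOfSet_iff] at hc
    obtain ⟨b, hb, hconj⟩ := hc
    rw [isConj_iff] at hconj
    obtain ⟨g, rfl⟩ := hconj
    have hbR : b ∈ R s k := base_subset_R s k hb
    refine ⟨⟨g * b * g⁻¹, conj_mem s k g b hbR⟩, ?_, rfl⟩
    exact conj_base_mem_closure s k hs hk g b hb hbR
  obtain ⟨⟨v, hv⟩, hvT, hveq⟩ := Subgroup.mem_map.mp (hle hwN)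
  have hveq' : v = w := hveq
  subst hveq'
  exact hvT

end GenFermat
end
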